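/- arXiv:2002.02694 — 4 statements merged into one kernel-verified Lean document; each statement's English description precedes it below -/
import Mathlib

section
/- Every powerfully nilpotent p-group that can be generated by 2 elements is strongly powerful. -/
/-- `H.pPow k` is the subgroup generated by the `k`-th powers of the elements of `H`. -/
def Subgroup.pPow {G : Type*} [Group G] (H : Subgroup G) (k : ℕ) : Subgroup G :=
  Subgroup.closure ((fun x => x ^ k) '' (H : Set G))

/-- A `p`-group `G` is powerful if `p` is odd and `[G,G] ≤ G^p`, or `p = 2` and `[G,G] ≤ G^4`. -/
def IsPowerfulGroup (p : ℕ) (G : Type*) [Group G] : Prop :=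
  IsPGroup p G ∧
    ((Odd p ∧ commutator G ≤ Subgroup.pPow ⊤ p) ∨
      (p = 2 ∧ commutator G ≤ Subgroup.pPow ⊤ 4))

/-- A powerful `p`-group is powerfully nilpotent if it has an ascending chain of subgroups
`⊥ = H 0 ≤ H 1 ≤ ⋯ ≤ H n = ⊤` that is powerfully central, i.e. `[H (i+1), G] ≤ (H i)^p`. -/
def IsPowerfullyNilpotent (p : ℕ) (G : Type*) [Group G] : Prop :=
  IsPowerfulGroup p G ∧
    ∃ (n : ℕ) (H : ℕ → Subgroup G), H 0 = ⊥ ∧ H n = ⊤ ∧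
      (∀ i < n, H i ≤ H (i + 1)) ∧
      ∀ i < n, ⁅H (i + 1), (⊤ : Subgroup G)⁆ ≤ (H i).pPow p

/-- A finite `p`-group `G` is strongly powerful if `[G,G] ≤ G^(p^2)`. -/
def IsStronglyPowerful (p : ℕ) (G : Type*) [Group G] : Prop :=
  commutator G ≤ Subgroup.pPow ⊤ (p ^ 2)

open scoped commutatorElement

section Helpers

variable {G : Type*} [Group G]

lemma comm_mul_left' (u w v : G) (hw : ∀ x : G, Commute ⁅w, v⁆ x) :
    ⁅u * w, v⁆ = ⁅u, v⁆ * ⁅w, v⁆ := by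
  have h1 : ⁅u * w, v⁆ = u * ⁅w, v⁆ * u⁻¹ * ⁅u, v⁆ := by
    simp only [commutatorElement_def]; group
  rw [h1, ← (hw u).eq, ← (hw ⁅u, v⁆).eq]
  group

lemma comm_pow_left' (u v : G) (hz : ∀ x : G, Commute ⁅u, v⁆ x) (k : ℕ) :
    ⁅u ^ k, v⁆ = ⁅u, v⁆ ^ k := by
  induction k with
  | zero => simp
  | succ k ih =>
    rw [pow_succ', comm_mul_left' u (u ^ k) v (by rw [ih]; exact fun x => (hz x).pow_left k),
      ih, pow_succ']

lemma comm_mul_left (hc : ∀ x y g : G, Commute ⁅x, y⁆ g) (u w v : G) :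
    ⁅u * w, v⁆ = ⁅u, v⁆ * ⁅w, v⁆ :=
  comm_mul_left' u w v (fun x => hc w v x)

lemma comm_pow_left (hc : ∀ x y g : G, Commute ⁅x, y⁆ g) (u v : G) (k : ℕ) :
    ⁅u ^ k, v⁆ = ⁅u, v⁆ ^ k :=
  comm_pow_left' u v (fun x => hc u v x) k

lemma comm_inv_left (hc : ∀ x y g : G, Commute ⁅x, y⁆ g) (u v : G) :
    ⁅u⁻¹, v⁆ = ⁅u, v⁆⁻¹ := by
  have h1 : ⁅u⁻¹ * u, v⁆ = ⁅u⁻¹, v⁆ * ⁅u, v⁆ := comm_mul_left hc u⁻¹ u v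
  rw [inv_mul_cancel, commutatorElement_one_left] at h1
  exact eq_inv_of_mul_eq_one_left h1.symm

lemma comm_zpow_left (hc : ∀ x y g : G, Commute ⁅x, y⁆ g) (u v : G) (m : ℤ) :
    ⁅u ^ m, v⁆ = ⁅u, v⁆ ^ m := by
  cases m with
  | ofNat k => simpa using comm_pow_left hc u v k
  | negSucc k =>
    rw [zpow_negSucc, zpow_negSucc, comm_inv_left hc, comm_pow_left hc]

lemma comm_zpow_right (hc : ∀ x y g : G, Commute ⁅x, y⁆ g) (u v : G) (m : ℤ) :
    ⁅u, v ^ m⁆ = ⁅u, v⁆ ^ m := by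
  rw [← commutatorElement_inv, comm_zpow_left hc, ← inv_zpow, commutatorElement_inv]

/-- the basic class-two power identity. -/
lemma mul_pow_choose (hc : ∀ x y g : G, Commute ⁅x, y⁆ g) (x y : G) (k : ℕ) :
    (x * y) ^ k = x ^ k * y ^ k * ⁅y, x⁆ ^ k.choose 2 := by
  induction k with
  | zero => simp
  | succ k ih =>
    have hz : ∀ g : G, Commute (⁅y, x⁆ ^ k.choose 2) g := fun g => (hc y x g).pow_left _
    have hzk : ∀ g : G, Commute (⁅y, x⁆ ^ k) g := fun g => (hc y x g).pow_left _
    have hyx : y ^ k * x = ⁅y, x⁆ ^ k * (x * y ^ k) := by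
      have h1 : ⁅y ^ k, x⁆ = ⁅y, x⁆ ^ k := comm_pow_left hc y x k
      have h2 : y ^ k * x = ⁅y ^ k, x⁆ * (x * y ^ k) := by
        simp only [commutatorElement_def]; group
      rw [h2, h1]
    have hchoose : (k + 1).choose 2 = k.choose 2 + k := by
      rw [Nat.choose_succ_succ]
      simp [Nat.choose_one_right, Nat.add_comm]
    calc (x * y) ^ (k + 1) = (x * y) ^ k * (x * y) := pow_succ _ _
      _ = x ^ k * y ^ k * ⁅y, x⁆ ^ k.choose 2 * (x * y) := by rw [ih]
      _ = x ^ k * (y ^ k * x) * y * ⁅y, x⁆ ^ k.choose 2 := by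
          rw [mul_assoc (x ^ k * y ^ k), (hz (x * y)).eq]
          group
      _ = x ^ k * (⁅y, x⁆ ^ k * (x * y ^ k)) * y * ⁅y, x⁆ ^ k.choose 2 := by rw [hyx]
      _ = ⁅y, x⁆ ^ k * (x ^ k * x * (y ^ k * y)) * ⁅y, x⁆ ^ k.choose 2 := by
          rw [← mul_assoc (x ^ k) (⁅y, x⁆ ^ k), (hzk (x ^ k)).symm.eq]
          group
      _ = x ^ (k + 1) * y ^ (k + 1) * ⁅y, x⁆ ^ ((k + 1).choose 2) := by
          rw [hchoose, pow_add, ← pow_succ, ← pow_succ, (hzk (x ^ (k + 1) * y ^ (k + 1))).eq]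
          group

lemma pPow_map_le {G' : Type*} [Group G'] (f : G →* G') (K : Subgroup G) (k : ℕ) :
    (K.pPow k).map f ≤ (K.map f).pPow k := by
  rw [Subgroup.pPow, MonoidHom.map_closure]
  apply Subgroup.closure_mono
  rintro _ ⟨_, ⟨x, hx, rfl⟩, rfl⟩
  exact ⟨f x, ⟨x, hx, rfl⟩, (map_pow f x k).symm⟩

end Helpers

section MainAux

variable {G : Type*} [Group G]

theorem main_aux {p : ℕ} (hp : p.Prime) (hodd : Odd p)
    (hexp : ∀ g : G, g ^ p ^ 2 = 1)
    {n : ℕ} {H : ℕ → Subgroup G} (h0 : H 0 = ⊥) (hn : H n = ⊤)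
    (hchain : ∀ i < n, ⁅H (i + 1), (⊤ : Subgroup G)⁆ ≤ (H i).pPow p)
    {a b : G} (hab : Subgroup.closure ({a, b} : Set G) = ⊤) :
    ∀ x y : G, ⁅x, y⁆ = 1 := by
  rcases Nat.eq_zero_or_pos n with hn0 | hnpos
  · subst hn0
    have hbt : (⊥ : Subgroup G) = ⊤ := h0 ▸ hn
    intro x y
    have hx : x ∈ (⊥ : Subgroup G) := hbt ▸ Subgroup.mem_top x
    have hy : y ∈ (⊥ : Subgroup G) := hbt ▸ Subgroup.mem_top y
    rw [Subgroup.mem_bot] at hx hy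
    rw [hx, hy]; simp
  -- the subgroup of central elements of order dividing p
  · set Z : Subgroup G :=
      { carrier := {g | (∀ x : G, Commute g x) ∧ g ^ p = 1}
        one_mem' := ⟨fun x => Commute.one_left x, one_pow p⟩
        mul_mem' := by
          rintro g h ⟨hg1, hg2⟩ ⟨hh1, hh2⟩
          refine ⟨fun x => (hg1 x).mul_left (hh1 x), ?_⟩
          rw [(hg1 h).mul_pow, hg2, hh2, one_mul]
        inv_mem' := by
          rintro g ⟨hg1, hg2⟩
          exact ⟨fun x => (hg1 x).inv_left, by rw [inv_pow, hg2, inv_one]⟩ } with hZdef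
    have hZ : ∀ i, i ≤ n → (H i).pPow p ≤ Z := by
      intro i
      induction i with
      | zero =>
        intro _
        rw [h0, Subgroup.pPow]
        apply (Subgroup.closure_le _).mpr
        rintro _ ⟨x, hx, rfl⟩
        have : x = 1 := Subgroup.mem_bot.mp hx
        subst this
        simpa using (Z.one_mem)
      | succ i ih =>
        intro hi
        have hZi : (H i).pPow p ≤ Z := ih (Nat.le_of_succ_le hi)
        rw [Subgroup.pPow]
        apply (Subgroup.closure_le _).mpr
        rintro _ ⟨h, hh, rfl⟩
        have hcent : ∀ g : G, ⁅h, g⁆ ∈ Z := fun g =>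
          hZi (hchain i hi (Subgroup.commutator_mem_commutator hh (Subgroup.mem_top g)))
        refine ⟨fun g => ?_, by rw [← pow_mul, ← pow_two]; exact hexp h⟩
        have hzg : ∀ x : G, Commute ⁅h, g⁆ x := (hcent g).1
        have hpow : ⁅h ^ p, g⁆ = ⁅h, g⁆ ^ p := comm_pow_left' h g hzg p
        have : ⁅h ^ p, g⁆ = 1 := by rw [hpow, (hcent g).2]
        exact (commutatorElement_eq_one_iff_commute.mp this)
    have hcomZ : ∀ x y : G, ⁅x, y⁆ ∈ Z := by
      intro x y
      have h1 : n - 1 < n := Nat.sub_lt hnpos one_pos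
      have hx : x ∈ H (n - 1 + 1) := by
        rw [Nat.sub_add_cancel hnpos, hn]; exact Subgroup.mem_top x
      exact hZ (n - 1) (Nat.sub_le n 1)
        (hchain (n - 1) h1 (Subgroup.commutator_mem_commutator hx (Subgroup.mem_top y)))
    have hc : ∀ x y g : G, Commute ⁅x, y⁆ g := fun x y g => (hcomZ x y).1 g
    have hcp : ∀ x y : G, ⁅x, y⁆ ^ p = 1 := fun x y => (hcomZ x y).2
    -- the p-th power map is a homomorphism
    have hhom : ∀ x y : G, (x * y) ^ p = x ^ p * y ^ p := by
      intro x y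
      rw [mul_pow_choose hc x y p]
      have h2 : 2 ∣ p - 1 := by
        rcases hodd with ⟨m, hm⟩
        exact ⟨m, by omega⟩
      have hch : p.choose 2 = p * ((p - 1) / 2) := by
        rw [Nat.choose_two_right, Nat.mul_div_assoc p h2]
      rw [hch, pow_mul, hcp y x, one_pow, mul_one]
    set φ : G →* G := { toFun := fun g => g ^ p, map_one' := one_pow p, map_mul' := hhom }
      with hφdef
    have hpPowφ : ∀ K : Subgroup G, K.pPow p = K.map φ := by
      intro K
      have himg : ((fun x => x ^ p) '' (K : Set G)) = ⇑φ '' (K : Set G) := rfl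
      rw [Subgroup.pPow, himg, ← MonoidHom.map_closure, Subgroup.closure_eq]
    set c : G := ⁅a, b⁆ with hcdef
    have hccomm : ∀ g : G, Commute c g := fun g => hc a b g
    -- every element of G has the normal form a^x b^y c^t
    have hW : ∀ g : G, ∃ x y t : ℤ, g = a ^ x * b ^ y * c ^ t := by
      have hCA2 : ∀ (t x' : ℤ), c ^ t * a ^ x' = a ^ x' * c ^ t := fun t x' =>
        ((hccomm (a ^ x')).zpow_left t).eq
      have hCA : ∀ (t x' : ℤ) (u : G), c ^ t * (a ^ x' * u) = a ^ x' * (c ^ t * u) := by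
        intro t x' u
        rw [← mul_assoc, hCA2, mul_assoc]
      have hBC2 : ∀ (y' t : ℤ), b ^ y' * c ^ t = c ^ t * b ^ y' := fun y' t =>
        (((hccomm (b ^ y')).zpow_left t).eq).symm
      have hBC : ∀ (y' t : ℤ) (u : G), b ^ y' * (c ^ t * u) = c ^ t * (b ^ y' * u) := by
        intro y' t u
        rw [← mul_assoc, hBC2, mul_assoc]
      have hBA2 : ∀ (y' x' : ℤ), b ^ y' * a ^ x' = a ^ x' * (c ^ (-(y' * x')) * b ^ y') := by
        intro y' x'
        have h1 : ⁅b ^ y', a ^ x'⁆ = c ^ (-(y' * x')) := by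
          rw [comm_zpow_left hc, comm_zpow_right hc, ← zpow_mul, ← commutatorElement_inv a b,
            inv_zpow, ← zpow_neg, ← hcdef]
          ring_nf
        have h2 : b ^ y' * a ^ x' = ⁅b ^ y', a ^ x'⁆ * (a ^ x' * b ^ y') := by
          simp only [commutatorElement_def]; group
        rw [h2, h1, hCA]
      have hBA : ∀ (y' x' : ℤ) (u : G),
          b ^ y' * (a ^ x' * u) = a ^ x' * (c ^ (-(y' * x')) * (b ^ y' * u)) := by
        intro y' x' u
        rw [← mul_assoc, hBA2, mul_assoc, mul_assoc]
      set W : Subgroup G :=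
        { carrier := {g | ∃ x y t : ℤ, g = a ^ x * b ^ y * c ^ t}
          one_mem' := ⟨0, 0, 0, by simp⟩
          mul_mem' := by
            rintro g h ⟨x1, y1, t1, rfl⟩ ⟨x2, y2, t2, rfl⟩
            refine ⟨x1 + x2, y1 + y2, t1 + t2 - y1 * x2, ?_⟩
            simp only [mul_assoc, hBA, hBA2, hBC, hBC2, hCA, hCA2]
            group
          inv_mem' := by
            rintro g ⟨x, y, t, rfl⟩
            refine ⟨-x, -y, -(y * x) - t, ?_⟩
            simp only [mul_inv_rev, ← zpow_neg, mul_assoc, hBA, hBA2, hBC, hBC2, hCA, hCA2]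
            group } with hWdef
      intro g
      have hg : g ∈ W := by
        have hle : Subgroup.closure ({a, b} : Set G) ≤ W := by
          apply (Subgroup.closure_le _).mpr
          rintro x (rfl | rfl)
          · exact ⟨1, 0, 0, by simp⟩
          · exact ⟨0, 1, 0, by simp⟩
        exact hle (hab ▸ Subgroup.mem_top g)
      exact hg
    -- descent along the chain
    have hdesc : ∀ j, j < n → c ∈ (H j).pPow p → c = 1 := by
      intro j
      induction j with
      | zero =>
        intro _ hcH
        rw [h0, hpPowφ] at hcH
        obtain ⟨h, hh, hhp⟩ := hcH
        have hh1 : h = 1 := by simpa using hh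
        subst hh1
        rw [← hhp]; exact (one_pow p)
      | succ j ih =>
        intro hjn hcH
        rw [hpPowφ] at hcH
        obtain ⟨h, hh, hhp⟩ := hcH
        obtain ⟨x, y, t, rfl⟩ := hW h
        have hjn' : j < n := Nat.lt_of_succ_lt hjn
        have hchainj := hchain j hjn'
        -- compute the two commutators
        have hcb : ⁅a ^ x * b ^ y * c ^ t, b⁆ = c ^ x := by
          rw [comm_mul_left hc, comm_mul_left hc, comm_zpow_left hc a b x,
            comm_zpow_left hc b b y, comm_zpow_left hc c b t]
          have h1 : ⁅b, b⁆ = 1 := commutatorElement_eq_one_iff_commute.mpr (Commute.refl b)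
          have h2 : ⁅c, b⁆ = 1 := commutatorElement_eq_one_iff_commute.mpr (hccomm b)
          rw [h1, h2, one_zpow, one_zpow, mul_one, mul_one, hcdef]
        have hca : ⁅a ^ x * b ^ y * c ^ t, a⁆ = c ^ (-y) := by
          rw [comm_mul_left hc, comm_mul_left hc, comm_zpow_left hc a a x,
            comm_zpow_left hc b a y, comm_zpow_left hc c a t]
          have h1 : ⁅a, a⁆ = 1 := commutatorElement_eq_one_iff_commute.mpr (Commute.refl a)
          have h2 : ⁅c, a⁆ = 1 := commutatorElement_eq_one_iff_commute.mpr (hccomm a)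
          rw [h1, h2, one_zpow, one_zpow, one_mul, mul_one, ← commutatorElement_inv a b,
            inv_zpow, ← zpow_neg]
        have hcxmem : c ^ x ∈ (H j).pPow p := by
          rw [← hcb]
          exact hchainj (Subgroup.commutator_mem_commutator hh (Subgroup.mem_top b))
        have hcymem : c ^ y ∈ (H j).pPow p := by
          have : c ^ (-y) ∈ (H j).pPow p := by
            rw [← hca]
            exact hchainj (Subgroup.commutator_mem_commutator hh (Subgroup.mem_top a))
          simpa using ((H j).pPow p).inv_mem this
        have hcpz : c ^ (p : ℤ) = 1 := by
          rw [zpow_natCast]; exact hcp a b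
        by_cases hx : (p : ℤ) ∣ x
        · by_cases hy : (p : ℤ) ∣ y
          · -- c is a p²-th power, hence trivial
            obtain ⟨x', rfl⟩ := hx
            obtain ⟨y', rfl⟩ := hy
            have hap : (a ^ ((p : ℤ) * x')) ^ p = 1 := by
              rw [← zpow_natCast (a ^ ((p:ℤ) * x')) p, ← zpow_mul]
              have : (p : ℤ) * x' * p = (x' * (p ^ 2 : ℕ) : ℤ) := by push_cast; ring
              rw [this, zpow_mul, zpow_natCast, hexp]
            have hbp : (b ^ ((p : ℤ) * y')) ^ p = 1 := by
              rw [← zpow_natCast (b ^ ((p:ℤ) * y')) p, ← zpow_mul]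
              have : (p : ℤ) * y' * p = (y' * (p ^ 2 : ℕ) : ℤ) := by push_cast; ring
              rw [this, zpow_mul, zpow_natCast, hexp]
            have hcpw : (c ^ t) ^ p = 1 := by
              rw [← zpow_natCast (c ^ t) p, ← zpow_mul, mul_comm, zpow_mul, hcpz, one_zpow]
            have : φ (a ^ ((p:ℤ) * x') * b ^ ((p:ℤ) * y') * c ^ t) = 1 := by
              rw [map_mul, map_mul]
              show (a ^ ((p:ℤ) * x')) ^ p * (b ^ ((p:ℤ) * y')) ^ p * (c ^ t) ^ p = 1
              rw [hap, hbp, hcpw]; simp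
            rw [← hhp, this]
          · -- p ∤ y : descend using c^y
            have hcop : IsCoprime (p : ℤ) y := by
              rw [Int.isCoprime_iff_gcd_eq_one]
              have : Nat.Coprime p y.natAbs :=
                (Nat.Prime.coprime_iff_not_dvd hp).mpr (fun hd => hy (Int.natCast_dvd.mpr hd))
              simpa [Int.gcd, Int.natAbs_natCast] using this
            obtain ⟨u, v, huv⟩ := hcop
            have hcd : c ∈ (H j).pPow p := by
              have heq : c = (c ^ (p:ℤ)) ^ u * (c ^ y) ^ v := by
                rw [← zpow_mul, ← zpow_mul, ← zpow_add,
                  show (p:ℤ) * u + y * v = 1 by linear_combination huv, zpow_one]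
              rw [heq, hcpz, one_zpow, one_mul]
              exact Subgroup.zpow_mem _ hcymem v
            exact ih hjn' hcd
        · -- p ∤ x : descend using c^x
          have hcop : IsCoprime (p : ℤ) x := by
            rw [Int.isCoprime_iff_gcd_eq_one]
            have : Nat.Coprime p x.natAbs :=
              (Nat.Prime.coprime_iff_not_dvd hp).mpr (fun hd => hx (Int.natCast_dvd.mpr hd))
            simpa [Int.gcd, Int.natAbs_natCast] using this
          obtain ⟨u, v, huv⟩ := hcop
          have hcd : c ∈ (H j).pPow p := by
            have heq : c = (c ^ (p:ℤ)) ^ u * (c ^ x) ^ v := by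
              rw [← zpow_mul, ← zpow_mul, ← zpow_add,
                show (p:ℤ) * u + x * v = 1 by linear_combination huv, zpow_one]
            rw [heq, hcpz, one_zpow, one_mul]
            exact Subgroup.zpow_mem _ hcxmem v
          exact ih hjn' hcd
    -- run the descent from the top
    have hc1 : c = 1 := by
      have h1 : n - 1 < n := Nat.sub_lt hnpos one_pos
      have hamem : a ∈ H (n - 1 + 1) := by
        rw [Nat.sub_add_cancel hnpos, hn]; exact Subgroup.mem_top a
      exact hdesc (n - 1) h1
        (hchain (n - 1) h1 (Subgroup.commutator_mem_commutator hamem (Subgroup.mem_top b)))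
    -- conclude commutativity
    have habc : Commute a b := commutatorElement_eq_one_iff_commute.mp hc1
    intro x y
    obtain ⟨x1, y1, t1, rfl⟩ := hW x
    obtain ⟨x2, y2, t2, rfl⟩ := hW y
    rw [commutatorElement_eq_one_iff_commute, hc1]
    simp only [one_zpow, mul_one]
    exact ((Commute.refl a).zpow_zpow x1 x2 |>.mul_right (habc.zpow_zpow x1 y2)).mul_left
      ((habc.symm.zpow_zpow y1 x2).mul_right ((Commute.refl b).zpow_zpow y1 y2))

end MainAux

/-- Every powerfully nilpotent `p`-group that can be generated by 2 elements is
strongly powerful. -/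
theorem isStronglyPowerful_of_isPowerfullyNilpotent_of_two_generated
    (p : ℕ) (hp : p.Prime) (G : Type*) [Group G] [Finite G]
    (hG : IsPowerfullyNilpotent p G)
    (hgen : ∃ a b : G, Subgroup.closure ({a, b} : Set G) = ⊤) :
    IsStronglyPowerful p G := by
  obtain ⟨⟨hpG, hcase⟩, n, H, h0, hn, hmono, hchain⟩ := hG
  rcases hp.eq_two_or_odd' with hp2 | hodd
  · -- p = 2 : immediate from powerfulness
    subst hp2
    rcases hcase with ⟨h2, _⟩ | ⟨_, h4⟩
    · exact absurd h2 (by decide)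
    · intro g hg
      have : (4 : ℕ) = 2 ^ 2 := by norm_num
      exact this ▸ h4 hg
  · -- p odd : quotient by G^{p²} and apply the main lemma
    obtain ⟨a, b, hab⟩ := hgen
    set K : Subgroup G := Subgroup.pPow ⊤ (p ^ 2) with hKdef
    have hKnormal : K.Normal := by
      constructor
      intro m hm g
      rw [hKdef, Subgroup.pPow] at hm ⊢
      induction hm using Subgroup.closure_induction with
      | mem x hx =>
        obtain ⟨z, _, rfl⟩ := hx
        exact Subgroup.subset_closure ⟨g * z * g⁻¹, Subgroup.mem_top _, by
          simp [mul_pow, conj_pow]⟩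
      | one => simpa using Subgroup.one_mem _
      | mul x y _ _ hx hy =>
        have : g * (x * y) * g⁻¹ = (g * x * g⁻¹) * (g * y * g⁻¹) := by group
        rw [this]; exact Subgroup.mul_mem _ hx hy
      | inv x _ hx =>
        have : g * x⁻¹ * g⁻¹ = (g * x * g⁻¹)⁻¹ := by group
        rw [this]; exact Subgroup.inv_mem _ hx
    letI := hKnormal
    set π : G →* G ⧸ K := QuotientGroup.mk' K with hπdef
    have hπsurj : Function.Surjective π := QuotientGroup.mk'_surjective K
    have hexpQ : ∀ q : G ⧸ K, q ^ p ^ 2 = 1 := by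
      intro q
      obtain ⟨g, rfl⟩ := hπsurj q
      rw [← map_pow]
      rw [hπdef]
      rw [QuotientGroup.mk'_apply, QuotientGroup.eq_one_iff]
      exact Subgroup.subset_closure ⟨g, Subgroup.mem_top g, rfl⟩
    have habQ : Subgroup.closure ({π a, π b} : Set (G ⧸ K)) = ⊤ := by
      have h1 : (Subgroup.closure ({a, b} : Set G)).map π = ⊤ := by
        rw [hab, Subgroup.map_top_of_surjective π hπsurj]
      rwa [MonoidHom.map_closure, Set.image_insert_eq, Set.image_singleton] at h1
    have hchainQ : ∀ i < n, ⁅(H (i + 1)).map π, (⊤ : Subgroup (G ⧸ K))⁆ ≤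
        ((H i).map π).pPow p := by
      intro i hi
      have h1 : (⊤ : Subgroup (G ⧸ K)) = (⊤ : Subgroup G).map π :=
        (Subgroup.map_top_of_surjective π hπsurj).symm
      rw [h1, ← Subgroup.map_commutator]
      calc (⁅H (i + 1), (⊤ : Subgroup G)⁆).map π ≤ ((H i).pPow p).map π :=
            Subgroup.map_mono (hchain i hi)
        _ ≤ ((H i).map π).pPow p := pPow_map_le π (H i) p
    have h0Q : (H 0).map π = ⊥ := by rw [h0, Subgroup.map_bot]
    have hnQ : (H n).map π = ⊤ := by rw [hn, Subgroup.map_top_of_surjective π hπsurj]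
    have hmain := main_aux (H := fun i => (H i).map π) (n := n) (a := π a) (b := π b) hp hodd hexpQ h0Q hnQ hchainQ habQ
    -- transfer back
    rw [IsStronglyPowerful, commutator_def]
    apply Subgroup.commutator_le.mpr
    intro g1 _ g2 _
    have : π ⁅g1, g2⁆ = 1 := by
      rw [map_commutatorElement]
      exact hmain (π g1) (π g2)
    have hker : ⁅g1, g2⁆ ∈ π.ker := this
    rwa [hπdef, QuotientGroup.ker_mk'] at hker
end

section
/- Let p be a prime and let n, m, r be integers with 2 ≤ r ≤ n − 1 and n − r ≤ m. Then the group G(n,m,r) has order p^{n+m}, is non-abelian, and is powerfully nilpotent. -/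
open scoped commutatorElement

/-- The relations of the presentation `⟨a, b ∣ a^(p^n) = 1, b^(p^m) = 1, [a,b] = a^(p^r)⟩`. -/
def splitRels (p n m r : ℕ) : Set (FreeGroup (Fin 2)) :=
  {FreeGroup.of (0 : Fin 2) ^ p ^ n, FreeGroup.of (1 : Fin 2) ^ p ^ m,
    ⁅FreeGroup.of (0 : Fin 2), FreeGroup.of (1 : Fin 2)⁆ * (FreeGroup.of (0 : Fin 2) ^ p ^ r)⁻¹}

/-- The group `G(n,m,r) = ⟨a, b ∣ a^(p^n) = 1, b^(p^m) = 1, [a,b] = a^(p^r)⟩`. -/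
abbrev GSplit (p n m r : ℕ) : Type := PresentedGroup (splitRels p n m r)

namespace GSplitAux

open SemidirectProduct Multiplicative Subgroup

section Arith

lemma geom_dvd {p : ℕ} {x : ℤ} (h : (p:ℤ) ∣ x - 1) :
    (p:ℤ) ∣ ∑ i ∈ Finset.range p, x ^ i := by
  have h2 : ∑ i ∈ Finset.range p, x ^ i
      = (∑ i ∈ Finset.range p, (x ^ i - 1)) + p := by
    rw [Finset.sum_sub_distrib]; simp
  rw [h2]
  refine dvd_add (Finset.dvd_sum fun i _ => ?_) dvd_rfl
  have hg := geom_sum_mul x i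
  rw [← hg]
  exact h.mul_left _

lemma step_dvd {p : ℕ} {x : ℤ} {s : ℕ} (hs : 1 ≤ s)
    (h : (p:ℤ)^s ∣ x - 1) : (p:ℤ)^(s+1) ∣ x^p - 1 := by
  have h1 : (p:ℤ) ∣ x - 1 := (dvd_pow_self (p:ℤ) (by omega : s ≠ 0)).trans h
  have hg := geom_dvd h1
  have h2 := mul_dvd_mul hg h
  rw [geom_sum_mul] at h2
  calc (p:ℤ)^(s+1) = p * p^s := by ring
  _ ∣ x^p - 1 := h2

lemma key_dvd (p r : ℕ) (hr : 1 ≤ r) : ∀ j, (p:ℤ)^(r+j) ∣ (1 - (p:ℤ)^r)^(p^j) - 1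
  | 0 => by
      have : (1 - (p:ℤ)^r)^(p^0) - 1 = -((p:ℤ)^r) := by ring
      rw [this, add_zero]
      exact dvd_neg.mpr dvd_rfl
  | (j+1) => by
      have ih := key_dvd p r hr j
      have h1 : (1 - (p:ℤ)^r)^(p^(j+1)) = ((1 - (p:ℤ)^r)^(p^j))^p := by
        rw [← pow_mul, pow_succ]
      rw [h1, show r + (j+1) = (r+j) + 1 by ring]
      exact step_dvd (by omega) ih

end Arith

noncomputable section Defs

open scoped Classical in
/-- The unit `1 - p^r` of `ZMod (p^n)`. -/
def uu (p n r : ℕ) : (ZMod (p^n))ˣ :=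
  if h : IsUnit (1 - (p : ZMod (p^n))^r) then h.unit else 1

lemma isUnit_base (p n r : ℕ) (hr : 1 ≤ r) : IsUnit (1 - (p : ZMod (p^n))^r) := by
  refine IsNilpotent.isUnit_one_sub ⟨n, ?_⟩
  rw [← pow_mul]
  have h1 : ((p:ZMod (p^n)))^(r*n) = ((p^(r*n) : ℕ) : ZMod (p^n)) := by push_cast; ring
  rw [h1, ZMod.natCast_eq_zero_iff]
  exact pow_dvd_pow p (Nat.le_mul_of_pos_left n (by omega))

lemma uu_val (p n r : ℕ) (hr : 1 ≤ r) :
    ((uu p n r : (ZMod (p^n))ˣ) : ZMod (p^n)) = 1 - (p : ZMod (p^n))^r := by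
  rw [uu, dif_pos (isUnit_base p n r hr)]
  exact (isUnit_base p n r hr).unit_spec

lemma uu_pow (p n m r : ℕ) (hp : 2 ≤ p) (hr : 1 ≤ r) (hrn : r + 1 ≤ n) (hm : n - r ≤ m) :
    (uu p n r) ^ (p^m) = 1 := by
  ext
  rw [Units.val_pow_eq_pow_val, uu_val p n r hr, Units.val_one]
  have h1 : ((1 - (p:ℤ)^r : ℤ) : ZMod (p^n)) = 1 - (p : ZMod (p^n))^r := by push_cast; ring
  rw [← h1, ← Int.cast_pow, show (1 : ZMod (p^n)) = ((1:ℤ) : ZMod (p^n)) by push_cast; ring]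
  rw [ZMod.intCast_eq_intCast_iff]
  have h2 : (1 - (p:ℤ)^r)^(p^(n-r)) ≡ 1 [ZMOD (p^n : ℕ)] := by
    have := key_dvd p r hr (n - r)
    rw [show r + (n - r) = n by omega] at this
    have h3 : ((p^n : ℕ) : ℤ) = (p:ℤ)^n := by push_cast; ring
    exact (Int.ModEq.symm (Int.modEq_iff_dvd.mpr (by rw [h3]; simpa using this)))
  have h4 := h2.pow (p^(m-(n-r)))
  rw [one_pow, ← pow_mul, ← pow_add, show n - r + (m - (n-r)) = m by omega] at h4
  exact h4

open scoped Classical in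
/-- Hom out of `Multiplicative (ZMod k)` sending the generator to an element `g` of order
dividing `k`; junk (trivial hom) if `g^k ≠ 1`. -/
def powHom {G : Type*} [Group G] (k : ℕ) (g : G) : Multiplicative (ZMod k) →* G :=
  if hg : ((k:ℕ):ℤ) • Additive.ofMul g = 0 then
    AddMonoidHom.toMultiplicativeLeft
      (ZMod.lift k ⟨zmultiplesHom (Additive G) (Additive.ofMul g), hg⟩)
  else 1

lemma powHom_cond {G : Type*} [Group G] {k : ℕ} {g : G} (hg : g ^ k = 1) :
    ((k:ℕ):ℤ) • Additive.ofMul g = 0 := by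
  rw [← ofMul_zpow, zpow_natCast, hg, ofMul_one]

lemma powHom_coe {G : Type*} [Group G] {k : ℕ} {g : G} (hg : g ^ k = 1) (j : ℤ) :
    powHom k g (ofAdd ((j : ZMod k))) = g ^ j := by
  rw [powHom, dif_pos (powHom_cond hg), AddMonoidHom.coe_toMultiplicativeLeft]
  show Additive.toMul (ZMod.lift k _ (Multiplicative.toAdd (ofAdd ((j : ZMod k))))) = g ^ j
  rw [toAdd_ofAdd, ZMod.lift_coe]
  show Additive.toMul (j • Additive.ofMul g) = g ^ j
  rw [← ofMul_zpow, toMul_ofMul]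

lemma powHom_natCast {G : Type*} [Group G] {k : ℕ} {g : G} (hg : g ^ k = 1) (t : ℕ) :
    powHom k g (ofAdd ((t : ZMod k))) = g ^ t := by
  have := powHom_coe hg (t : ℤ)
  rw [Int.cast_natCast, zpow_natCast] at this
  exact this

lemma powHom_one {G : Type*} [Group G] {k : ℕ} {g : G} (hg : g ^ k = 1) :
    powHom k g (ofAdd 1) = g := by
  have := powHom_natCast hg 1
  rw [Nat.cast_one, pow_one] at this
  exact this

lemma powHom_eq {G : Type*} [Group G] {k : ℕ} [NeZero k] {g : G} (hg : g ^ k = 1)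
    (h : Multiplicative (ZMod k)) :
    powHom k g h = g ^ (Multiplicative.toAdd h).val := by
  have h1 : h = ofAdd (((Multiplicative.toAdd h).val : ℕ) : ZMod k) := by
    rw [ZMod.natCast_val, ZMod.cast_id, ofAdd_toAdd]
  conv_lhs => rw [h1]
  exact powHom_natCast hg _

/-- ext for homs out of `Multiplicative (ZMod k)`. -/
lemma mulZMod_hom_ext {k : ℕ} [NeZero k] {G : Type*} [Group G]
    {f g : Multiplicative (ZMod k) →* G} (h : f (ofAdd 1) = g (ofAdd 1)) : f = g := by
  refine MonoidHom.ext fun x => ?_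
  have h1 : x = (ofAdd (1 : ZMod k)) ^ (Multiplicative.toAdd x).val := by
    rw [← ofAdd_nsmul, nsmul_eq_mul, mul_one, ZMod.natCast_val, ZMod.cast_id, ofAdd_toAdd]
  rw [h1, map_pow, map_pow, h]

end Defs

noncomputable section Model

/-- `AddAut A` as multiplicative automorphisms of `Multiplicative A`. -/
def autMul {A : Type*} [AddGroup A] : Multiplicative (AddAut A) →* MulAut (Multiplicative A) where
  toFun f := AddEquiv.toMultiplicative (Multiplicative.toAdd f)
  map_one' := by ext x; rfl
  map_mul' f g := by ext x; rfl

/-- The hom `ZMod (p^m) → (ZMod (p^n))ˣ` sending the generator to `1 - p^r`. -/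
def chi (p n m r : ℕ) : Multiplicative (ZMod (p^m)) →* (ZMod (p^n))ˣ :=
  powHom (p^m) (uu p n r)

/-- The action of `ZMod (p^m)` on `ZMod (p^n)` defining `G(n,m,r)`. -/
def phi (p n m r : ℕ) :
    Multiplicative (ZMod (p^m)) →* MulAut (Multiplicative (ZMod (p^n))) :=
  autMul.comp ((DistribMulAction.toAddAut (ZMod (p^n))ˣ (ZMod (p^n))).comp (chi p n m r))

/-- The model for `G(n,m,r)` as a semidirect product. -/
abbrev Mgrp (p n m r : ℕ) : Type :=
  Multiplicative (ZMod (p^n)) ⋊[phi p n m r] Multiplicative (ZMod (p^m))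

lemma phi_apply (p n m r : ℕ) (h : Multiplicative (ZMod (p^m)))
    (z : Multiplicative (ZMod (p^n))) :
    phi p n m r h z = ofAdd (((chi p n m r h : (ZMod (p^n))ˣ) : ZMod (p^n)) *
      Multiplicative.toAdd z) := rfl

end Model

noncomputable section Subgroups

variable (p n m r : ℕ)

lemma pPow_mono {G : Type*} [Group G] {H K : Subgroup G} (h : H ≤ K) (k : ℕ) :
    H.pPow k ≤ K.pPow k :=
  Subgroup.closure_mono (Set.image_mono h)

lemma pow_mem_pPow {G : Type*} [Group G] {H : Subgroup G} {x : G} (hx : x ∈ H) (k : ℕ) :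
    x ^ k ∈ H.pPow k :=
  Subgroup.subset_closure ⟨x, hx, rfl⟩

lemma map_pPow {G G' : Type*} [Group G] [Group G'] (f : G →* G') (H : Subgroup G) (k : ℕ) :
    (H.pPow k).map f = (H.map f).pPow k := by
  rw [Subgroup.pPow, Subgroup.pPow, MonoidHom.map_closure]
  congr 1
  rw [Subgroup.coe_map, Set.image_image, Set.image_image]
  exact Set.image_congr fun x _ => (map_pow f x k)

lemma ofAdd_gen_pow (N k s : ℕ) :
    (ofAdd ((p^k : ℕ) : ZMod N)) ^ (p^s) = ofAdd ((p^(k+s) : ℕ) : ZMod N) := by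
  rw [← ofAdd_nsmul, nsmul_eq_mul]
  congr 1
  push_cast
  ring

/-- The subgroup of the model generated by `a^(p^k)`. -/
def Ak (k : ℕ) : Subgroup (Mgrp p n m r) :=
  Subgroup.zpowers (inl (ofAdd ((p^k : ℕ) : ZMod (p^n))))

/-- The preimage in the model of the subgroup generated by `b^(p^k)`. -/
def Ck (k : ℕ) : Subgroup (Mgrp p n m r) :=
  (Subgroup.zpowers (ofAdd ((p^k : ℕ) : ZMod (p^m)))).comap
    (rightHom : Mgrp p n m r →* Multiplicative (ZMod (p^m)))

lemma Ak_gen_pow (k s : ℕ) :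
    (inl (ofAdd ((p^k : ℕ) : ZMod (p^n))) : Mgrp p n m r) ^ (p^s)
      = inl (ofAdd ((p^(k+s) : ℕ) : ZMod (p^n))) := by
  rw [← map_pow, ofAdd_gen_pow]

lemma mem_Ak_iff [NeZero (p^n)] {k : ℕ} {g : Mgrp p n m r} :
    g ∈ Ak p n m r k ↔
      ∃ c : ZMod (p^n), g = inl (ofAdd (((p^k : ℕ) : ZMod (p^n)) * c)) := by
  rw [Ak, Subgroup.mem_zpowers_iff]
  constructor
  · rintro ⟨j, rfl⟩
    refine ⟨((j : ℤ) : ZMod (p^n)), ?_⟩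
    rw [← map_zpow, ← ofAdd_zsmul, zsmul_eq_mul, mul_comm]
  · rintro ⟨c, rfl⟩
    refine ⟨(c.val : ℤ), ?_⟩
    rw [← map_zpow, ← ofAdd_zsmul, zsmul_eq_mul]
    push_cast
    rw [ZMod.natCast_val, ZMod.cast_id, mul_comm]

lemma Ak_succ_le (k : ℕ) : Ak p n m r (k+1) ≤ Ak p n m r k := by
  rw [Ak, Ak, Subgroup.zpowers_le, ← Ak_gen_pow p n m r k 1, pow_one]
  exact Subgroup.npow_mem_zpowers _ _

lemma Ak_le_of_le {k j : ℕ} (h : k ≤ j) : Ak p n m r j ≤ Ak p n m r k := by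
  induction j with
  | zero => have : k = 0 := by omega
            exact this ▸ le_rfl
  | succ j ih =>
    rcases Nat.eq_or_lt_of_le h with h1 | h1
    · exact h1 ▸ le_rfl
    · exact (Ak_succ_le p n m r j).trans (ih (by omega))

lemma Ak_le_pPow (k s : ℕ) : Ak p n m r (k+s) ≤ (Ak p n m r k).pPow (p^s) := by
  rw [Ak, Subgroup.zpowers_le, ← Ak_gen_pow p n m r k s]
  exact pow_mem_pPow (Subgroup.mem_zpowers _) _

lemma Ak_n_eq_bot : Ak p n m r n = ⊥ := by
  rw [Ak, ZMod.natCast_self, ofAdd_zero, map_one, Subgroup.zpowers_one_eq_bot]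

lemma Ck_zero_eq_top [NeZero (p^m)] : Ck p n m r 0 = ⊤ := by
  rw [Ck, eq_top_iff]
  rintro g -
  rw [Subgroup.mem_comap, Subgroup.mem_zpowers_iff]
  refine ⟨((Multiplicative.toAdd (rightHom g)).val : ℤ), ?_⟩
  rw [← ofAdd_zsmul, zsmul_eq_mul, pow_zero, Nat.cast_one, mul_one]
  push_cast
  rw [ZMod.natCast_val, ZMod.cast_id, ofAdd_toAdd]

lemma Ck_succ_le (k : ℕ) : Ck p n m r (k+1) ≤ Ck p n m r k := by
  refine Subgroup.comap_mono ?_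
  rw [Subgroup.zpowers_le, ← ofAdd_gen_pow p (p^m) k 1, pow_one]
  exact Subgroup.npow_mem_zpowers _ _

lemma A0_le_Ck (k : ℕ) : Ak p n m r 0 ≤ Ck p n m r k := by
  rw [Ak, Subgroup.zpowers_le, Ck, Subgroup.mem_comap, rightHom_inl]
  exact Subgroup.one_mem _

lemma comm_inl (z : Multiplicative (ZMod (p^n))) (g : Mgrp p n m r) :
    ⁅(inl z : Mgrp p n m r), g⁆ = inl (z * (phi p n m r g.right z)⁻¹) := by
  ext
  · simp [commutatorElement_def, mul_comm, mul_assoc, mul_left_comm]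
  · simp [commutatorElement_def]

end Subgroups

noncomputable section Comms

variable (p n m r : ℕ)

lemma one_sub_chi (hp : 2 ≤ p) (hr : 1 ≤ r) (hrn : r + 1 ≤ n) (hm : n - r ≤ m)
    [NeZero (p^m)] (h : Multiplicative (ZMod (p^m))) :
    ∃ d : ZMod (p^n),
      1 - ((chi p n m r h : (ZMod (p^n))ˣ) : ZMod (p^n)) = ((p^r : ℕ) : ZMod (p^n)) * d := by
  rw [chi, powHom_eq (uu_pow p n m r hp hr hrn hm) h]
  set t := (Multiplicative.toAdd h).val with ht
  set x := ((uu p n r : (ZMod (p^n))ˣ) : ZMod (p^n)) with hxdef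
  refine ⟨∑ i ∈ Finset.range t, x ^ i, ?_⟩
  have hx : x - 1 = -(((p^r : ℕ)) : ZMod (p^n)) := by
    rw [show x = 1 - (p : ZMod (p^n))^r from uu_val p n r hr]
    push_cast
    ring
  have hg := geom_sum_mul x t
  have hval : ((uu p n r ^ t : (ZMod (p^n))ˣ) : ZMod (p^n)) = x ^ t :=
    Units.val_pow_eq_pow_val _ _
  rw [hval, show (1 : ZMod (p^n)) - x^t = -((∑ i ∈ Finset.range t, x ^ i) * (x-1)) by
    rw [hg]; ring, hx]
  ring

lemma comm_Ak (hp : 2 ≤ p) (hr : 1 ≤ r) (hrn : r + 1 ≤ n) (hm : n - r ≤ m)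
    [NeZero (p^n)] [NeZero (p^m)] (k : ℕ) :
    ⁅Ak p n m r k, (⊤ : Subgroup (Mgrp p n m r))⁆ ≤ Ak p n m r (k + r) := by
  rw [Subgroup.commutator_le]
  intro g1 hg1 g2 _
  obtain ⟨c, rfl⟩ := (mem_Ak_iff p n m r).mp hg1
  rw [comm_inl]
  obtain ⟨d, hd⟩ := one_sub_chi p n m r hp hr hrn hm g2.right
  refine (mem_Ak_iff p n m r).mpr ⟨d * c, ?_⟩
  congr 1
  rw [phi_apply, toAdd_ofAdd, ← ofAdd_neg, ← ofAdd_add]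
  congr 1
  have h1 : ((p^(k+r) : ℕ) : ZMod (p^n))
      = ((p^k : ℕ) : ZMod (p^n)) * ((p^r : ℕ) : ZMod (p^n)) := by push_cast; ring
  rw [h1]
  linear_combination (((p^k : ℕ) : ZMod (p^n)) * c) * hd

lemma commutator_le_Ar (hp : 2 ≤ p) (hr : 1 ≤ r) (hrn : r + 1 ≤ n) (hm : n - r ≤ m)
    [NeZero (p^n)] [NeZero (p^m)] :
    commutator (Mgrp p n m r) ≤ Ak p n m r r := by
  have hdvd : (p^r : ℕ) ∣ p^n := pow_dvd_pow p (by omega)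
  set π := ZMod.castHom hdvd (ZMod (p^r)) with hπ
  have hπchi : ∀ h : Multiplicative (ZMod (p^m)),
      π ((chi p n m r h : (ZMod (p^n))ˣ) : ZMod (p^n)) = 1 := by
    intro h
    rw [chi, powHom_eq (uu_pow p n m r hp hr hrn hm) h, Units.val_pow_eq_pow_val, map_pow,
      uu_val p n r hr, map_sub, map_one, map_pow, map_natCast]
    have h2 : ((p : ZMod (p^r)))^r = ((p^r : ℕ) : ZMod (p^r)) := by push_cast; ring
    rw [h2, ZMod.natCast_self, sub_zero, one_pow]
  set f1 : Multiplicative (ZMod (p^n)) →*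
      Multiplicative (ZMod (p^r)) × Multiplicative (ZMod (p^m)) :=
    (MonoidHom.inl _ _).comp (AddMonoidHom.toMultiplicative π.toAddMonoidHom) with hf1
  set f2 : Multiplicative (ZMod (p^m)) →*
      Multiplicative (ZMod (p^r)) × Multiplicative (ZMod (p^m)) := MonoidHom.inr _ _ with hf2
  have hf1app : ∀ z, f1 z = (ofAdd (π (Multiplicative.toAdd z)), 1) := fun z => rfl
  have hconj : ∀ (x y : Multiplicative (ZMod (p^r)) × Multiplicative (ZMod (p^m))),
      x * y * x⁻¹ = y := fun x y => by rw [mul_comm x y, mul_assoc, mul_inv_cancel, mul_one]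
  have hcond : ∀ h, f1.comp ((phi p n m r h)).toMonoidHom
      = (MulAut.conj (f2 h)).toMonoidHom.comp f1 := by
    intro h
    refine MonoidHom.ext fun z => ?_
    show f1 (phi p n m r h z) = MulAut.conj (f2 h) (f1 z)
    rw [MulAut.conj_apply, hconj, hf1app, hf1app, phi_apply, toAdd_ofAdd, map_mul, hπchi,
      one_mul]
  set q := SemidirectProduct.lift f1 f2 hcond with hq
  rw [_root_.commutator_def, Subgroup.commutator_le]
  intro g1 _ g2 _
  have hqc : q ⁅g1, g2⁆ = 1 := by
    rw [map_commutatorElement]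
    exact commutatorElement_eq_one_iff_commute.mpr (mul_comm _ _)
  set c := ⁅g1, g2⁆ with hc
  have hqc2 : q c = (ofAdd (π (Multiplicative.toAdd c.left)) * 1, 1 * c.right) := rfl
  rw [hqc2, Prod.ext_iff] at hqc
  simp only [mul_one, one_mul, Prod.fst_one, Prod.snd_one] at hqc
  obtain ⟨hq1, hq2⟩ := hqc
  have hq1' : π (Multiplicative.toAdd c.left) = 0 := ofAdd_eq_one.mp hq1
  -- extract divisibility
  have h1 : (((Multiplicative.toAdd c.left).val : ℕ) : ZMod (p^r)) = 0 := by
    rw [ZMod.natCast_val, ← ZMod.castHom_apply (h := hdvd)]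
    exact hq1'
  obtain ⟨t, ht⟩ := (ZMod.natCast_eq_zero_iff _ _).mp h1
  have hcl : c = inl c.left := by
    conv_lhs => rw [← inl_left_mul_inr_right c]
    rw [hq2, map_one, mul_one]
  refine (mem_Ak_iff p n m r).mpr ⟨(t : ZMod (p^n)), ?_⟩
  rw [hcl]
  congr 1
  rw [← ofAdd_toAdd c.left]
  congr 1
  calc Multiplicative.toAdd c.left
      = (((Multiplicative.toAdd c.left).val : ℕ) : ZMod (p^n)) := by
        rw [ZMod.natCast_val, ZMod.cast_id]
  _ = _ := by rw [ht]; push_cast; ring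

end Comms

noncomputable section MgrpMain

variable (p n m r : ℕ)

lemma Ar_le_pPow (s : ℕ) (hs : s ≤ r) :
    Ak p n m r r ≤ (⊤ : Subgroup (Mgrp p n m r)).pPow (p^s) := by
  have h1 := Ak_le_pPow p n m r (r-s) s
  rw [show r - s + s = r by omega] at h1
  exact h1.trans (pPow_mono le_top _)

lemma card_Mgrp : Nat.card (Mgrp p n m r) = p^(n+m) := by
  have e : Mgrp p n m r ≃ (ZMod (p^n)) × (ZMod (p^m)) :=
    ⟨fun g => (Multiplicative.toAdd g.left, Multiplicative.toAdd g.right),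
     fun x => ⟨ofAdd x.1, ofAdd x.2⟩, fun g => rfl, fun x => rfl⟩
  rw [Nat.card_congr e, Nat.card_prod, Nat.card_zmod, Nat.card_zmod, pow_add]

lemma isPowerful_Mgrp (hp : p.Prime) (hr : 2 ≤ r) (hrn : r + 1 ≤ n) (hm : n - r ≤ m) :
    IsPowerfulGroup p (Mgrp p n m r) := by
  haveI : Fact p.Prime := ⟨hp⟩
  haveI : NeZero (p^n) := ⟨(pow_pos hp.pos n).ne'⟩
  haveI : NeZero (p^m) := ⟨(pow_pos hp.pos m).ne'⟩
  refine ⟨IsPGroup.of_card (card_Mgrp p n m r), ?_⟩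
  have hcomm := commutator_le_Ar p n m r hp.two_le (by omega) hrn hm
  rcases hp.eq_two_or_odd' with h2 | hodd
  · right
    refine ⟨h2, hcomm.trans ?_⟩
    rw [show (4:ℕ) = p^2 by subst h2; norm_num]
    exact Ar_le_pPow p n m r 2 hr
  · left
    refine ⟨hodd, hcomm.trans ?_⟩
    have h1 := Ar_le_pPow p n m r 1 (by omega)
    rwa [pow_one] at h1

lemma isPowerfullyNilpotent_Mgrp (hp : p.Prime) (hr : 2 ≤ r) (hrn : r + 1 ≤ n)
    (hm : n - r ≤ m) : IsPowerfullyNilpotent p (Mgrp p n m r) := by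
  haveI : Fact p.Prime := ⟨hp⟩
  haveI : NeZero (p^n) := ⟨(pow_pos hp.pos n).ne'⟩
  haveI : NeZero (p^m) := ⟨(pow_pos hp.pos m).ne'⟩
  refine ⟨isPowerful_Mgrp p n m r hp hr hrn hm, n + m,
    (fun i => if i ≤ n then Ak p n m r (n - i) else Ck p n m r (m - (i - n))), ?_, ?_, ?_, ?_⟩
  · beta_reduce
    rw [if_pos (Nat.zero_le n), Nat.sub_zero, Ak_n_eq_bot]
  · beta_reduce
    have hm1 : 1 ≤ m := by omega
    rw [if_neg (by omega : ¬ (n + m ≤ n)), show m - (n + m - n) = 0 by omega]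
    exact Ck_zero_eq_top p n m r
  · intro i hi
    beta_reduce
    by_cases h1 : i + 1 ≤ n
    · rw [if_pos (by omega), if_pos h1]
      exact Ak_le_of_le p n m r (by omega)
    · by_cases h2 : i ≤ n
      · rw [if_pos h2, if_neg h1, show n - i = 0 by omega]
        exact A0_le_Ck p n m r _
      · rw [if_neg h2, if_neg h1, show m - (i - n) = (m - (i + 1 - n)) + 1 by omega]
        exact Ck_succ_le p n m r _
  · intro i hi
    beta_reduce
    have hpow : Ak p n m r 1 ≤ (Ak p n m r 0).pPow p := by
      have h4 := Ak_le_pPow p n m r 0 1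
      rw [pow_one] at h4
      simpa using h4
    by_cases h1 : i + 1 ≤ n
    · rw [if_pos h1, if_pos (by omega : i ≤ n)]
      have hc := comm_Ak p n m r hp.two_le (by omega) hrn hm (n - (i+1))
      refine hc.trans ?_
      have h3 : Ak p n m r (n - (i+1) + r) ≤ Ak p n m r ((n - i) + 1) :=
        Ak_le_of_le p n m r (by omega)
      have h5 := Ak_le_pPow p n m r (n - i) 1
      rw [pow_one] at h5
      exact h3.trans h5
    · rw [if_neg h1]
      have hcA : ⁅Ck p n m r (m - (i + 1 - n)), (⊤ : Subgroup (Mgrp p n m r))⁆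
          ≤ Ak p n m r 1 := by
        refine le_trans (Subgroup.commutator_mono le_top le_rfl) ?_
        refine le_trans (le_of_eq (_root_.commutator_def (Mgrp p n m r)).symm) ?_
        exact (commutator_le_Ar p n m r hp.two_le (by omega) hrn hm).trans
          (Ak_le_of_le p n m r (by omega))
      by_cases h2 : i ≤ n
      · rw [if_pos h2, show n - i = 0 by omega]
        exact hcA.trans hpow
      · rw [if_neg h2]
        exact hcA.trans (hpow.trans (pPow_mono (A0_le_Ck p n m r _) p))

lemma noncomm_Mgrp (hp : p.Prime) (hr : 2 ≤ r) (hrn : r + 1 ≤ n) (hm : n - r ≤ m) :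
    (inl (ofAdd (1 : ZMod (p^n))) : Mgrp p n m r) * inr (ofAdd (1 : ZMod (p^m)))
      ≠ inr (ofAdd (1 : ZMod (p^m))) * inl (ofAdd (1 : ZMod (p^n))) := by
  haveI : NeZero (p^m) := ⟨(pow_pos hp.pos m).ne'⟩
  intro hcontra
  have h1 := congrArg SemidirectProduct.left hcontra
  simp only [mul_left, left_inl, right_inl, left_inr, right_inr, map_one, mul_one, one_mul] at h1
  rw [phi_apply, toAdd_ofAdd, mul_one] at h1
  have h2 : (1 : ZMod (p^n)) = ((chi p n m r (ofAdd 1) : (ZMod (p^n))ˣ) : ZMod (p^n)) := by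
    exact Multiplicative.ofAdd.injective h1
  rw [chi, powHom_one (uu_pow p n m r hp.two_le (by omega) hrn hm), uu_val p n r (by omega)] at h2
  have h3 : ((p^r : ℕ) : ZMod (p^n)) = 0 := by
    push_cast
    linear_combination h2
  rw [ZMod.natCast_eq_zero_iff] at h3
  have h4 : p^n ≤ p^r := Nat.le_of_dvd (pow_pos hp.pos r) h3
  have h5 : p^r < p^n := Nat.pow_lt_pow_right hp.one_lt (by omega)
  omega

/-- Transport of powerful nilpotency along a group isomorphism. -/
lemma isPowerfullyNilpotent_of_mulEquiv {G G' : Type*} [Group G] [Group G'] {p : ℕ}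
    (e : G ≃* G') (h : IsPowerfullyNilpotent p G) : IsPowerfullyNilpotent p G' := by
  obtain ⟨⟨hpg, hpow⟩, k, H, h0, hk, hmono, hcomm⟩ := h
  have htop : (⊤ : Subgroup G).map e.toMonoidHom = ⊤ :=
    Subgroup.map_top_of_surjective _ e.surjective
  have hcommutator : commutator G' = (commutator G).map e.toMonoidHom := by
    rw [_root_.commutator_def, _root_.commutator_def, Subgroup.map_commutator, htop]
  refine ⟨⟨hpg.of_equiv e, ?_⟩, k, fun i => (H i).map e.toMonoidHom,
    by beta_reduce; rw [h0, Subgroup.map_bot], by beta_reduce; rw [hk, htop],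
    fun i hi => Subgroup.map_mono (hmono i hi), fun i hi => ?_⟩
  · rcases hpow with ⟨hodd, hle⟩ | ⟨h2, hle⟩
    · exact Or.inl ⟨hodd, by
        rw [hcommutator, ← htop, ← map_pPow]
        exact Subgroup.map_mono hle⟩
    · exact Or.inr ⟨h2, by
        rw [hcommutator, ← htop, ← map_pPow]
        exact Subgroup.map_mono hle⟩
  · rw [← htop, ← Subgroup.map_commutator, ← map_pPow]
    exact Subgroup.map_mono (hcomm i hi)

end MgrpMain

noncomputable section Presented

variable (p n m r : ℕ)

/-- The generator `a` of `G(n,m,r)`. -/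
def aGen : GSplit p n m r := PresentedGroup.of 0

/-- The generator `b` of `G(n,m,r)`. -/
def bGen : GSplit p n m r := PresentedGroup.of 1

lemma mk_rel_eq_one {x : FreeGroup (Fin 2)} (hx : x ∈ splitRels p n m r) :
    PresentedGroup.mk (splitRels p n m r) x = 1 :=
  (QuotientGroup.eq_one_iff _).mpr (Subgroup.subset_normalClosure hx)

lemma rel_a : (aGen p n m r)^(p^n) = 1 := by
  have h := mk_rel_eq_one p n m r (x := FreeGroup.of (0:Fin 2) ^ p^n)
    (Set.mem_insert _ _)
  rw [map_pow] at h
  exact h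

lemma rel_b : (bGen p n m r)^(p^m) = 1 := by
  have h := mk_rel_eq_one p n m r (x := FreeGroup.of (1:Fin 2) ^ p^m)
    (Set.mem_insert_iff.mpr (Or.inr (Set.mem_insert _ _)))
  rw [map_pow] at h
  exact h

lemma rel_c : ⁅aGen p n m r, bGen p n m r⁆ = (aGen p n m r)^(p^r) := by
  have h := mk_rel_eq_one p n m r
    (x := ⁅FreeGroup.of (0:Fin 2), FreeGroup.of (1:Fin 2)⁆ * (FreeGroup.of (0:Fin 2) ^ p^r)⁻¹)
    (Set.mem_insert_iff.mpr (Or.inr (Set.mem_insert_iff.mpr (Or.inr rfl))))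
  rw [map_mul, map_inv, map_pow, map_commutatorElement, mul_inv_eq_one] at h
  exact h

lemma conj_b_a : bGen p n m r * aGen p n m r * (bGen p n m r)⁻¹
    = (aGen p n m r) ^ ((1:ℤ) - (p:ℤ)^r) := by
  set A := aGen p n m r
  set B := bGen p n m r
  have h := rel_c p n m r
  rw [commutatorElement_def] at h
  have h2 : B * A⁻¹ * B⁻¹ = A⁻¹ * A^(p^r : ℕ) := by
    rw [← h]; simp only [A, B]; group
  have h3 : B * A * B⁻¹ = (B * A⁻¹ * B⁻¹)⁻¹ := by group
  rw [h3, h2, mul_inv_rev, inv_inv, ← zpow_natCast A (p^r), ← zpow_neg]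
  have h4 : ((1:ℤ) - (p:ℤ)^r) = -((p^r : ℕ) : ℤ) + 1 := by push_cast; ring
  rw [h4, zpow_add, zpow_one]

lemma conj_pow_b_a (t : ℕ) : (bGen p n m r)^t * aGen p n m r * ((bGen p n m r)^t)⁻¹
    = (aGen p n m r) ^ ((1 - (p:ℤ)^r)^t) := by
  induction t with
  | zero => simp
  | succ t ih =>
    set A := aGen p n m r
    set B := bGen p n m r
    have hb : B^(t+1) = B * B^t := by rw [pow_succ']
    rw [hb, mul_inv_rev]
    have h1 : B * B^t * A * ((B^t)⁻¹ * B⁻¹) = B * (B^t * A * (B^t)⁻¹) * B⁻¹ := by group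
    rw [h1, ih, ← conj_zpow (i := (1 - (p:ℤ)^r)^t) (a := B) (b := A), conj_b_a,
      ← zpow_mul]
    congr 1
    ring

/-- The hom `Multiplicative (ZMod (p^n)) →* GSplit` sending the generator to `a`. -/
def fa : Multiplicative (ZMod (p^n)) →* GSplit p n m r := powHom (p^n) (aGen p n m r)

/-- The hom `Multiplicative (ZMod (p^m)) →* GSplit` sending the generator to `b`. -/
def fb : Multiplicative (ZMod (p^m)) →* GSplit p n m r := powHom (p^m) (bGen p n m r)

lemma nonempty_mulEquiv (hp : p.Prime) (hr : 2 ≤ r) (hrn : r + 1 ≤ n) (hm : n - r ≤ m) :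
    Nonempty (GSplit p n m r ≃* Mgrp p n m r) := by
  haveI : NeZero (p^n) := ⟨(pow_pos hp.pos n).ne'⟩
  haveI : NeZero (p^m) := ⟨(pow_pos hp.pos m).ne'⟩
  have huu := uu_pow p n m r hp.two_le (by omega) hrn hm
  -- the canonical map θ : GSplit →* Mgrp
  have ofAdd_one_pow : ∀ (N k : ℕ),
      (ofAdd (1 : ZMod N))^k = ofAdd ((k : ℕ) : ZMod N) := fun N k => by
    rw [← ofAdd_nsmul, nsmul_eq_mul, mul_one]
  have hrels : ∀ x ∈ splitRels p n m r,
      FreeGroup.lift ![(inl (ofAdd (1 : ZMod (p^n))) : Mgrp p n m r),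
        inr (ofAdd (1 : ZMod (p^m)))] x = 1 := by
    intro x hx
    simp only [splitRels, Set.mem_insert_iff, Set.mem_singleton_iff] at hx
    rcases hx with rfl | rfl | rfl
    · rw [map_pow, FreeGroup.lift_apply_of]
      simp only [Matrix.cons_val_zero]
      rw [← map_pow, ofAdd_one_pow, ZMod.natCast_self, ofAdd_zero, map_one]
    · rw [map_pow, FreeGroup.lift_apply_of]
      simp only [Matrix.cons_val_one, Matrix.head_cons, Matrix.cons_val_zero]
      rw [← map_pow, ofAdd_one_pow, ZMod.natCast_self, ofAdd_zero, map_one]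
    · rw [map_mul, map_inv, map_pow, map_commutatorElement, FreeGroup.lift_apply_of,
        FreeGroup.lift_apply_of]
      simp only [Matrix.cons_val_zero, Matrix.cons_val_one, Matrix.head_cons]
      rw [mul_inv_eq_one, comm_inl, ← map_pow, ofAdd_one_pow]
      congr 1
      simp only [right_inr]
      rw [phi_apply, toAdd_ofAdd, mul_one, chi, powHom_one huu, ← ofAdd_neg, ← ofAdd_add]
      congr 1
      rw [uu_val p n r (by omega)]
      push_cast
      ring
  set θ : GSplit p n m r →* Mgrp p n m r := PresentedGroup.toGroup hrels with hθ
  have hθa : θ (aGen p n m r) = inl (ofAdd (1 : ZMod (p^n))) := by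
    rw [aGen, hθ, PresentedGroup.toGroup.of]
    simp
  have hθb : θ (bGen p n m r) = inr (ofAdd (1 : ZMod (p^m))) := by
    rw [bGen, hθ, PresentedGroup.toGroup.of]
    simp
  -- the inverse ψ : Mgrp →* GSplit
  have hcond : ∀ h, (fa p n m r).comp ((phi p n m r h)).toMonoidHom
      = (MulAut.conj (fb p n m r h)).toMonoidHom.comp (fa p n m r) := by
    intro h
    apply mulZMod_hom_ext
    show fa p n m r (phi p n m r h (ofAdd 1))
        = MulAut.conj (fb p n m r h) (fa p n m r (ofAdd 1))
    have h1 : fa p n m r (ofAdd 1) = aGen p n m r := powHom_one (rel_a p n m r)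
    have h2 : fb p n m r h = (bGen p n m r) ^ (Multiplicative.toAdd h).val :=
      powHom_eq (rel_b p n m r) h
    set t := (Multiplicative.toAdd h).val
    have h3 : phi p n m r h (ofAdd 1)
        = ofAdd ((((1 - (p:ℤ)^r)^t : ℤ) : ZMod (p^n))) := by
      rw [phi_apply, toAdd_ofAdd, mul_one, chi, powHom_eq huu h]
      congr 1
      rw [Units.val_pow_eq_pow_val, uu_val p n r (by omega)]
      push_cast
      ring
    have h5 : fa p n m r (ofAdd (((1 - (p:ℤ)^r)^t : ℤ) : ZMod (p^n)))
        = aGen p n m r ^ ((1 - (p:ℤ)^r)^t) := powHom_coe (rel_a p n m r) _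
    rw [h3, h5, MulAut.conj_apply, h1, h2, conj_pow_b_a]
  set ψ : Mgrp p n m r →* GSplit p n m r := SemidirectProduct.lift _ _ hcond with hψ
  have hψl : ψ (inl (ofAdd (1 : ZMod (p^n)))) = aGen p n m r := by
    rw [hψ, SemidirectProduct.lift_inl]
    exact powHom_one (rel_a p n m r)
  have hψr : ψ (inr (ofAdd (1 : ZMod (p^m)))) = bGen p n m r := by
    rw [hψ, SemidirectProduct.lift_inr]
    exact powHom_one (rel_b p n m r)
  have hcomp1 : ψ.comp θ = MonoidHom.id (GSplit p n m r) := by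
    apply PresentedGroup.ext
    intro x
    fin_cases x
    · show ψ (θ (aGen p n m r)) = aGen p n m r
      rw [hθa, hψl]
    · show ψ (θ (bGen p n m r)) = bGen p n m r
      rw [hθb, hψr]
  have hcomp2 : θ.comp ψ = MonoidHom.id (Mgrp p n m r) := by
    apply SemidirectProduct.hom_ext
    · apply mulZMod_hom_ext
      show θ (ψ (inl (ofAdd 1))) = inl (ofAdd 1)
      rw [hψl, hθa]
    · apply mulZMod_hom_ext
      show θ (ψ (inr (ofAdd 1))) = inr (ofAdd 1)
      rw [hψr, hθb]
  exact ⟨MonoidHom.toMulEquiv θ ψ hcomp1 hcomp2⟩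

end Presented

end GSplitAux

/-- For `2 ≤ r ≤ n - 1` and `n - r ≤ m`, the group `G(n,m,r)` has order `p^(n+m)`,
is non-abelian, and is powerfully nilpotent. -/
theorem gSplit_card_nonabelian_powerfullyNilpotent
    (p n m r : ℕ) (hp : p.Prime) (hr : 2 ≤ r) (hrn : r + 1 ≤ n) (hm : n - r ≤ m) :
    Nat.card (GSplit p n m r) = p ^ (n + m) ∧
    (¬∀ x y : GSplit p n m r, x * y = y * x) ∧
    IsPowerfullyNilpotent p (GSplit p n m r) := by
  obtain ⟨e⟩ := GSplitAux.nonempty_mulEquiv p n m r hp hr hrn hm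
  refine ⟨?_, ?_, ?_⟩
  · rw [Nat.card_congr e.toEquiv, GSplitAux.card_Mgrp]
  · intro hcomm
    refine GSplitAux.noncomm_Mgrp p n m r hp hr hrn hm ?_
    have h1 := hcomm (e.symm (SemidirectProduct.inl (Multiplicative.ofAdd 1)))
      (e.symm (SemidirectProduct.inr (Multiplicative.ofAdd 1)))
    have h2 := congrArg e h1
    simpa [map_mul] using h2
  · exact GSplitAux.isPowerfullyNilpotent_of_mulEquiv e.symm
      (GSplitAux.isPowerfullyNilpotent_Mgrp p n m r hp hr hrn hm)
end

section
/- Let p be a prime and x ≥ 4 an integer. The number of triples of integers (n,m,r) with n + m = x, 2 ≤ r ≤ n − 1 and n − r ≤ m (equivalently, the number of isomorphism classes of groups G(n,m,r) of order p^x) equals ((x−2)/2)^2 if x is even, and (x−3)(x−1)/4 if x is odd. -/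
open scoped commutatorElement

def gcount (y : ℕ) : ℕ :=
  ((Finset.range (y+1) ×ˢ Finset.range (y+1)).filter
    (fun ab : ℕ × ℕ => ab.1 + 2 * ab.2 ≤ y)).card

lemma gcount_succ (y : ℕ) : gcount (y+1) = gcount y + ((y+1)/2 + 1) := by
  unfold gcount
  have hsplit : ((Finset.range (y+2) ×ˢ Finset.range (y+2)).filter
      (fun ab : ℕ × ℕ => ab.1 + 2 * ab.2 ≤ y+1)) =
      ((Finset.range (y+2) ×ˢ Finset.range (y+2)).filter
        (fun ab : ℕ × ℕ => ab.1 + 2 * ab.2 ≤ y)) ∪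
      ((Finset.range (y+2) ×ˢ Finset.range (y+2)).filter
        (fun ab : ℕ × ℕ => ab.1 + 2 * ab.2 = y+1)) := by
    rw [← Finset.filter_or]
    apply Finset.filter_congr
    intro ab _
    constructor <;> intro h <;> omega
  have hdisj : Disjoint
      ((Finset.range (y+2) ×ˢ Finset.range (y+2)).filter
        (fun ab : ℕ × ℕ => ab.1 + 2 * ab.2 ≤ y))
      ((Finset.range (y+2) ×ˢ Finset.range (y+2)).filter
        (fun ab : ℕ × ℕ => ab.1 + 2 * ab.2 = y+1)) := by
    apply Finset.disjoint_filter_filter'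
    rw [disjoint_iff_inf_le]
    intro ab hab
    simp only [Pi.inf_apply, inf_Prop_eq] at hab
    omega
  rw [hsplit, Finset.card_union_of_disjoint hdisj]
  congr 1
  · -- same as gcount y : box shrink
    apply Finset.card_nbij (fun ab => ab)
    · intro ab hab
      simp only [Finset.mem_filter, Finset.mem_product, Finset.mem_range, Finset.mem_coe] at *
      omega
    · intro a _ b _ h; exact h
    · intro ab hab
      simp only [Finset.coe_filter, Set.mem_setOf_eq, Finset.mem_product,
        Finset.mem_range, Set.mem_image] at *
      exact ⟨ab, by omega, rfl⟩
  · -- card of the diagonal = (y+1)/2 + 1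
    rw [show (y+1)/2 + 1 = (Finset.range ((y+1)/2 + 1)).card from (Finset.card_range _).symm]
    apply Finset.card_nbij' (fun ab => ab.2) (fun b => (y+1-2*b, b))
    · intro ab hab
      simp only [Finset.mem_filter, Finset.mem_product, Finset.mem_range,
        Finset.mem_coe] at *
      omega
    · intro b hb
      simp only [Finset.mem_filter, Finset.mem_product, Finset.mem_range,
        Finset.mem_coe] at *
      omega
    · intro ab hab
      simp only [Finset.mem_filter, Finset.mem_product, Finset.mem_range,
        Finset.mem_coe] at *
      ext <;> simp <;> omega
    · intro b _; rfl

lemma gcount_eq (y : ℕ) :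
    gcount y = if Even y then (y/2+1)^2 else (y/2+1)*(y/2+2) := by
  induction y with
  | zero => decide
  | succ y ih =>
    rw [gcount_succ, ih]
    rcases Nat.even_or_odd y with ⟨k, hk⟩ | ⟨k, hk⟩
    · subst hk
      have h1 : Even (k + k) := ⟨k, rfl⟩
      have h2 : ¬ Even (k + k + 1) := by simp [Nat.even_add_one, h1]
      rw [if_pos h1, if_neg h2]
      have e1 : (k+k)/2 = k := by omega
      have e2 : (k+k+1)/2 = k := by omega
      rw [e1, e2]; ring
    · subst hk
      have h1 : ¬ Even (2*k + 1) := by simp [Nat.even_add_one]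
      have h2 : Even (2*k + 1 + 1) := ⟨k+1, by ring⟩
      rw [if_neg h1, if_pos h2]
      have e1 : (2*k+1)/2 = k := by omega
      have e2 : (2*k+1+1)/2 = k+1 := by omega
      rw [e1, e2]; ring


/-- For `x ≥ 4`, the number of triples `(n, m, r)` with `n + m = x`, `2 ≤ r ≤ n - 1` and
`n - r ≤ m` (equivalently, the number of isomorphism classes of groups `G(n,m,r)` of order
`p^x`) equals `((x-2)/2)^2` if `x` is even and `(x-3)*(x-1)/4` if `x` is odd. -/
theorem count_split_groups (p : ℕ) (hp : p.Prime) (x : ℕ) (hx : 4 ≤ x) :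
    ((Finset.range (x + 1) ×ˢ Finset.range (x + 1) ×ˢ Finset.range (x + 1)).filter
        (fun t : ℕ × ℕ × ℕ =>
          t.1 + t.2.1 = x ∧ 2 ≤ t.2.2 ∧ t.2.2 + 1 ≤ t.1 ∧ t.1 - t.2.2 ≤ t.2.1)).card =
      if Even x then ((x - 2) / 2) ^ 2 else (x - 3) * (x - 1) / 4 := by
  have hcard : ((Finset.range (x + 1) ×ˢ Finset.range (x + 1) ×ˢ Finset.range (x + 1)).filter
        (fun t : ℕ × ℕ × ℕ =>
          t.1 + t.2.1 = x ∧ 2 ≤ t.2.2 ∧ t.2.2 + 1 ≤ t.1 ∧ t.1 - t.2.2 ≤ t.2.1)).card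
      = gcount (x - 4) := by
    unfold gcount
    apply Finset.card_nbij' (fun t : ℕ × ℕ × ℕ => (t.2.2 - 2, t.1 - t.2.2 - 1))
      (fun ab : ℕ × ℕ => (ab.1 + ab.2 + 3, x - (ab.1 + ab.2 + 3), ab.1 + 2))
    · intro t ht
      simp only [Finset.mem_filter, Finset.mem_product, Finset.mem_range,
        Finset.mem_coe] at *
      omega
    · intro ab hab
      simp only [Finset.mem_filter, Finset.mem_product, Finset.mem_range,
        Finset.mem_coe] at *
      omega
    · intro t ht
      simp only [Finset.mem_filter, Finset.mem_product, Finset.mem_range,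
        Finset.mem_coe] at *
      obtain ⟨⟨-, -, -⟩, h1, h2, h3, h4⟩ := ht
      ext <;> simp <;> omega
    · intro ab hab
      simp only [Finset.mem_filter, Finset.mem_product, Finset.mem_range,
        Finset.mem_coe] at *
      ext <;> simp <;> omega
  rw [hcard, gcount_eq]
  rcases Nat.even_or_odd x with ⟨k, hk⟩ | ⟨k, hk⟩
  · have h1 : Even (x - 4) := by subst hk; exact ⟨k-2, by omega⟩
    rw [if_pos h1, if_pos ⟨k, hk⟩]
    have : (x-4)/2 + 1 = (x-2)/2 := by omega
    rw [this]
  · have h1 : ¬ Even (x - 4) := by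
      subst hk; rintro ⟨j, hj⟩; omega
    have h2 : ¬ Even x := by subst hk; rintro ⟨j, hj⟩; omega
    rw [if_neg h1, if_neg h2]
    have e1 : (x-4)/2 + 1 = k - 1 := by omega
    have e2 : (x-4)/2 + 2 = k := by omega
    have e3 : x - 3 = 2*(k-1) := by omega
    have e4 : x - 1 = 2*k := by omega
    rw [e1, e2, e3, e4]
    have : 2*(k-1)*(2*k) = 4*((k-1)*k) := by ring
    rw [this, Nat.mul_div_cancel_left _ (by norm_num)]
end

section
/- Let p be a prime and let n, m, r be integers with 2 ≤ r ≤ n − 1 and n − r ≤ m. In the group G = G(n,m,r) with generators a, b as in the presentation, the center of G equals the subgroup ⟨a^{p^{n−r}}, b^{p^{n−r}}⟩ generated by a^{p^{n−r}} and b^{p^{n−r}}. -/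
open scoped commutatorElement

/-! ### Auxiliary number theory -/

/-- `(1+x)^n = 1 + n*x + x^2 * (junk)`. -/
lemma aux_one_add_pow (x : ℤ) (n : ℕ) : (x^2 : ℤ) ∣ (1+x)^n - 1 - n*x := by
  induction n with
  | zero => simp
  | succ k ih =>
    have : (1+x)^(k+1) - 1 - ((k:ℤ)+1)*x
        = ((1+x)^k - 1 - k*x) * (1+x) + k * x^2 := by ring
    push_cast
    rw [this]
    exact dvd_add (ih.mul_right _) ⟨k, by ring⟩

lemma aux_step (p : ℕ) (s : ℕ) (hs : 2 ≤ s) (c : ℤ) :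
    ∃ c' : ℤ, (1 + c * (p:ℤ)^s)^p = 1 + c' * (p:ℤ)^(s+1) ∧ (p:ℤ) ∣ c' - c := by
  obtain ⟨e, he⟩ := aux_one_add_pow (c * (p:ℤ)^s) p
  refine ⟨c + e * c^2 * (p:ℤ)^(s-1), ?_, ⟨e * c^2 * (p:ℤ)^(s-2), by
    rw [add_sub_cancel_left]
    have : s - 1 = (s-2) + 1 := by omega
    rw [this]; ring⟩⟩
  have h1 : (1 + c * (p:ℤ)^s)^p = 1 + p * (c * (p:ℤ)^s) + (c * (p:ℤ)^s)^2 * e := by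
    linarith [he]
  rw [h1]
  have h2 : s + s = (s + 1) + (s - 1) := by omega
  have : (c * (p:ℤ)^s)^2 = c^2 * ((p:ℤ)^(s+1) * (p:ℤ)^(s-1)) := by
    rw [← pow_add, ← h2]; ring
  rw [this]; ring

lemma aux_main (p r : ℕ) (hr : 2 ≤ r) (k : ℕ) :
    ∃ c : ℤ, (1 - (p:ℤ)^r)^(p^k) = 1 + c * (p:ℤ)^(r+k) ∧ (p:ℤ) ∣ c + 1 := by
  induction k with
  | zero => exact ⟨-1, by ring_nf, by simp⟩
  | succ k ih =>
    obtain ⟨c, hc, hc1⟩ := ih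
    obtain ⟨c', hc', hdvd⟩ := aux_step p (r+k) (by omega) c
    refine ⟨c', ?_, ?_⟩
    · rw [pow_succ, pow_mul, hc, hc']
      norm_num [← add_assoc]
    · have : c' + 1 = (c' - c) + (c + 1) := by ring
      rw [this]; exact dvd_add hdvd hc1

/-! ### Generic group-theoretic helpers -/

open Subgroup

/-- Units of `ZMod q` acting as multiplicative automorphisms of `Multiplicative (ZMod q)`. -/
def mulAutHom (q : ℕ) : (ZMod q)ˣ →* MulAut (Multiplicative (ZMod q)) where
  toFun v := AddEquiv.toMultiplicative (AddAut.mulLeft v)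
  map_one' := by ext x; simp; rfl
  map_mul' v w := by ext x; simp [mul_assoc]; rfl

@[simp] lemma mulAutHom_apply (q : ℕ) (v : (ZMod q)ˣ) (x : Multiplicative (ZMod q)) :
    mulAutHom q v x = Multiplicative.ofAdd ((v : ZMod q) * x.toAdd) := rfl

/-- The homomorphism `ZMod M →* G` sending `1` to an element `g` with `g ^ M = 1`. -/
def zmodPowHom {G : Type*} [Group G] {M : ℕ} [NeZero M] (g : G) (hg : g ^ M = 1) :
    Multiplicative (ZMod M) →* G where
  toFun j := g ^ (j.toAdd).val
  map_one' := by simp [toAdd_one]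
  map_mul' x y := by
    rw [← pow_add, pow_eq_pow_iff_modEq]
    have hd : orderOf g ∣ M := orderOf_dvd_of_pow_eq_one hg
    refine Nat.ModEq.of_dvd hd ?_
    show (x.toAdd + y.toAdd).val ≡ x.toAdd.val + y.toAdd.val [MOD M]
    rw [ZMod.val_add]
    exact (Nat.mod_modEq _ _)

@[simp] lemma zmodPowHom_apply {G : Type*} [Group G] {M : ℕ} [NeZero M] (g : G)
    (hg : g ^ M = 1)
    (j : Multiplicative (ZMod M)) : zmodPowHom g hg j = g ^ (j.toAdd).val := rfl

lemma zpow_eq_zpow_of_cast_eq {G : Type*} [Group G] {M : ℕ} {g : G} (hg : g ^ M = 1)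
    {z w : ℤ} (h : (z : ZMod M) = (w : ZMod M)) : g ^ z = g ^ w := by
  rw [zpow_eq_zpow_iff_modEq]
  have hd : ((orderOf g : ℤ)) ∣ (M : ℤ) := Int.natCast_dvd_natCast.2 (orderOf_dvd_of_pow_eq_one hg)
  exact Int.ModEq.of_dvd hd ((ZMod.intCast_eq_intCast_iff _ _ _).1 h)

lemma pow_eq_pow_of_cast_eq {G : Type*} [Group G] {M : ℕ} {g : G} (hg : g ^ M = 1)
    {z w : ℕ} (h : (z : ZMod M) = (w : ZMod M)) : g ^ z = g ^ w := by
  have := zpow_eq_zpow_of_cast_eq hg (z := z) (w := w) (by push_cast; exact_mod_cast h)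
  simpa [zpow_natCast] using this

/-- Transfer a `center = closure` statement along a `MulEquiv`. -/
lemma center_eq_closure_of_equiv {G H : Type*} [Group G] [Group H] (e : G ≃* H) (S : Set G)
    (h : Subgroup.center H = Subgroup.closure (⇑e '' S)) :
    Subgroup.center G = Subgroup.closure S := by
  have hc : Subgroup.center G = Subgroup.comap e.toMonoidHom (Subgroup.center H) := by
    ext x
    simp only [Subgroup.mem_comap, Subgroup.mem_center_iff, MulEquiv.coe_toMonoidHom]
    constructor
    · intro hx y
      obtain ⟨z, rfl⟩ := e.surjective y
      rw [← map_mul, ← map_mul, hx]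
    · intro hx y
      apply e.injective
      rw [map_mul, map_mul, hx]
  rw [hc, h]
  rw [Subgroup.comap_equiv_eq_map_symm' e, MonoidHom.map_closure]
  congr 1
  rw [← Set.image_comp]
  simp

/-! ### The unit `1 - p^r` of `ZMod (p^n)` -/

section Unit

variable (p n r : ℕ)

lemma isUnit_one_sub_pPow (hr : 1 ≤ r) (hn : 1 ≤ n) : IsUnit (1 - (p:ZMod (p^n))^r) := by
  have h0 : ((p : ZMod (p^n)))^n = 0 := by
    have : ((p^n : ℕ) : ZMod (p^n)) = 0 := ZMod.natCast_self _
    push_cast at this; exact this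
  have hnil : IsNilpotent ((p:ZMod (p^n))^r) := ⟨n, by
    rw [← pow_mul, mul_comm, pow_mul, h0, zero_pow (by omega)]⟩
  exact hnil.isUnit_one_sub

/-- The unit `1 - p^r` of `ZMod (p^n)`. -/
noncomputable def uU (hr : 1 ≤ r) (hn : 1 ≤ n) : (ZMod (p^n))ˣ :=
  (isUnit_one_sub_pPow p n r hr hn).unit

lemma uU_val (hr : 1 ≤ r) (hn : 1 ≤ n) :
    ((uU p n r hr hn : (ZMod (p^n))ˣ) : ZMod (p^n)) = ((1 - (p:ℤ)^r : ℤ) : ZMod (p^n)) := by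
  show ((isUnit_one_sub_pPow p n r hr hn).unit : ZMod (p^n)) = _
  rw [IsUnit.unit_spec]; push_cast; ring

lemma uU_pow_eq_one_iff (hr : 1 ≤ r) (hn : 1 ≤ n) (k : ℕ) :
    uU p n r hr hn ^ k = 1 ↔ ((p:ℤ))^n ∣ (1 - (p:ℤ)^r)^k - 1 := by
  rw [Units.ext_iff, Units.val_pow_eq_pow_val, Units.val_one, uU_val, ← Int.cast_pow,
    ← sub_eq_zero, ← Int.cast_one (R := ZMod (p^n)), ← Int.cast_sub,
    ZMod.intCast_zmod_eq_zero_iff_dvd]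
  push_cast
  rfl

lemma uU_pow_card (hp : p.Prime) (hr : 2 ≤ r) (hrn : r + 1 ≤ n) :
    uU p n r (by omega) (by omega) ^ p ^ (n-r) = 1 := by
  rw [uU_pow_eq_one_iff]
  obtain ⟨c, hc, -⟩ := aux_main p r hr (n-r)
  rw [hc]
  have h : r + (n - r) = n := by omega
  rw [h, add_sub_cancel_left]
  exact Dvd.intro_left c rfl

lemma orderOf_uU (hp : p.Prime) (hr : 2 ≤ r) (hrn : r + 1 ≤ n) :
    orderOf (uU p n r (by omega) (by omega)) = p ^ (n-r) := by
  have : Fact p.Prime := ⟨hp⟩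
  have hnot : ¬ uU p n r (by omega) (by omega) ^ p ^ (n-r-1) = 1 := by
    rw [uU_pow_eq_one_iff]
    obtain ⟨c, hc, hc1⟩ := aux_main p r hr (n-r-1)
    rw [hc]
    have h : r + (n - r - 1) = n - 1 := by omega
    rw [h, add_sub_cancel_left]
    intro hdvd
    have hp0 : (0:ℤ) < (p:ℤ) := by exact_mod_cast hp.pos
    have hpn : ((p:ℤ)^(n-1)) ≠ 0 := by positivity
    have key : (p:ℤ)^(n-1) * p ∣ (p:ℤ)^(n-1) * c := by
      have h2 : (p:ℤ)^(n-1) * p = (p:ℤ)^n := by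
        rw [← pow_succ]
        congr 1
        omega
      rw [h2]
      simpa [mul_comm] using hdvd
    have hpc : (p:ℤ) ∣ c := (mul_dvd_mul_iff_left hpn).mp key
    have hone : (p:ℤ) ∣ 1 := by simpa using dvd_sub hc1 hpc
    have := Int.le_of_dvd one_pos hone
    have := hp.two_le
    omega
  have h1 : n - r = (n - r - 1) + 1 := by omega
  rw [h1]
  exact orderOf_eq_prime_pow hnot (by rw [← h1]; exact uU_pow_card p n r hp hr hrn)

end Unit

/-! ### The semidirect product model and the main construction -/

section Main

open SemidirectProduct Multiplicative

variable (p n m r : ℕ)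

/-- Generator `a` of `GSplit`. -/
def aG : GSplit p n m r := PresentedGroup.of 0

/-- Generator `b` of `GSplit`. -/
def bG : GSplit p n m r := PresentedGroup.of 1

lemma mk_rel_one {x : FreeGroup (Fin 2)} (hx : x ∈ splitRels p n m r) :
    PresentedGroup.mk (splitRels p n m r) x = 1 := by
  apply (QuotientGroup.eq_one_iff _).2
  exact Subgroup.subset_normalClosure hx

lemma aG_pow : (aG p n m r) ^ p ^ n = 1 := by
  show PresentedGroup.mk (splitRels p n m r) (FreeGroup.of 0) ^ p ^ n = 1
  rw [← map_pow]
  exact mk_rel_one p n m r (by left; rfl)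

lemma bG_pow : (bG p n m r) ^ p ^ m = 1 := by
  show PresentedGroup.mk (splitRels p n m r) (FreeGroup.of 1) ^ p ^ m = 1
  rw [← map_pow]
  exact mk_rel_one p n m r (by right; left; rfl)

lemma comm_aG_bG : ⁅aG p n m r, bG p n m r⁆ = (aG p n m r) ^ p ^ r := by
  have h := mk_rel_one p n m r (x := ⁅FreeGroup.of (0 : Fin 2), FreeGroup.of (1 : Fin 2)⁆ *
      (FreeGroup.of (0 : Fin 2) ^ p ^ r)⁻¹) (by right; right; rfl)
  rw [map_mul, map_inv, map_pow, mul_inv_eq_one] at h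
  convert h using 2 <;> rfl

lemma conj_aG : (bG p n m r) * (aG p n m r) * (bG p n m r)⁻¹
    = (aG p n m r) ^ ((1:ℤ) - ((p^r : ℕ) : ℤ)) := by
  have h := comm_aG_bG p n m r
  rw [commutatorElement_def] at h
  have h2 : (bG p n m r) * (aG p n m r)⁻¹ * (bG p n m r)⁻¹
      = (aG p n m r)⁻¹ * (aG p n m r) ^ (p^r) := by
    rw [← h]; group
  have h3 : (bG p n m r) * (aG p n m r) * (bG p n m r)⁻¹
      = ((bG p n m r) * (aG p n m r)⁻¹ * (bG p n m r)⁻¹)⁻¹ := by group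
  rw [h3, h2, zpow_sub, zpow_one, zpow_natCast, mul_inv_rev, inv_inv]
  have : Commute ((aG p n m r) ^ (p^r))⁻¹ (aG p n m r) := (Commute.refl _).pow_left _ |>.inv_left
  rw [this.eq]

lemma conj_aG_zpow (z : ℤ) : (bG p n m r) * (aG p n m r) ^ z * (bG p n m r)⁻¹
    = (aG p n m r) ^ ((1 - ((p^r : ℕ) : ℤ)) * z) := by
  have : (bG p n m r) * (aG p n m r) ^ z * (bG p n m r)⁻¹
      = ((bG p n m r) * (aG p n m r) * (bG p n m r)⁻¹) ^ z := by
    rw [← MulAut.conj_apply, ← MulAut.conj_apply, map_zpow]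
  rw [this, conj_aG, ← zpow_mul]

lemma conj_aG_pow_bG (k : ℕ) (z : ℤ) :
    (bG p n m r) ^ k * (aG p n m r) ^ z * ((bG p n m r) ^ k)⁻¹
      = (aG p n m r) ^ ((1 - ((p^r : ℕ) : ℤ)) ^ k * z) := by
  induction k with
  | zero => simp
  | succ k ih =>
    have : (bG p n m r) ^ (k+1) * (aG p n m r) ^ z * ((bG p n m r) ^ (k+1))⁻¹
        = (bG p n m r) * ((bG p n m r) ^ k * (aG p n m r) ^ z * ((bG p n m r) ^ k)⁻¹)
          * (bG p n m r)⁻¹ := by group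
    rw [this, ih, conj_aG_zpow]
    congr 1
    ring

lemma neZero_pn (hp : p.Prime) : NeZero (p^n) := ⟨pow_ne_zero _ hp.pos.ne'⟩
lemma neZero_pm (hp : p.Prime) : NeZero (p^m) := ⟨pow_ne_zero _ hp.pos.ne'⟩

lemma uU_pow_m (hp : p.Prime) (hr : 2 ≤ r) (hrn : r + 1 ≤ n) (hm : n - r ≤ m) :
    uU p n r (by omega) (by omega) ^ p ^ m = 1 := by
  have h1 := uU_pow_card p n r hp hr hrn
  have h2 : p ^ m = p ^ (n-r) * p ^ (m - (n-r)) := by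
    rw [← pow_add]
    congr 1
    omega
  rw [h2, pow_mul, h1, one_pow]

/-- The action of `ZMod (p^m)` on `ZMod (p^n)` by multiplication by powers of `1 - p^r`. -/
noncomputable def phiSD (hp : p.Prime) (hr : 2 ≤ r) (hrn : r + 1 ≤ n) (hm : n - r ≤ m) :
    Multiplicative (ZMod (p^m)) →* MulAut (Multiplicative (ZMod (p^n))) :=
  letI : NeZero (p^m) := neZero_pm p m hp
  (mulAutHom (p^n)).comp (zmodPowHom (uU p n r (by omega) (by omega))
    (uU_pow_m p n m r hp hr hrn hm))

lemma phiSD_apply (hp : p.Prime) (hr : 2 ≤ r) (hrn : r + 1 ≤ n) (hm : n - r ≤ m)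
    (g : Multiplicative (ZMod (p^m))) (x : Multiplicative (ZMod (p^n))) :
    phiSD p n m r hp hr hrn hm g x
      = Multiplicative.ofAdd
          (((uU p n r (by omega) (by omega) : (ZMod (p^n))ˣ) : ZMod (p^n)) ^ (g.toAdd).val
            * x.toAdd) := by
  letI : NeZero (p^m) := neZero_pm p m hp
  show mulAutHom (p^n) (uU p n r (by omega) (by omega) ^ (g.toAdd).val) x = _
  rw [mulAutHom_apply, Units.val_pow_eq_pow_val]

/-- The concrete model: `ZMod (p^n) ⋊ ZMod (p^m)`. -/
abbrev GSD (hp : p.Prime) (hr : 2 ≤ r) (hrn : r + 1 ≤ n) (hm : n - r ≤ m) :=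
  (Multiplicative (ZMod (p^n))) ⋊[phiSD p n m r hp hr hrn hm] (Multiplicative (ZMod (p^m)))

lemma comm_inl_inr {N G : Type*} [Group N] [Group G] (φ : G →* MulAut N) (nn : N) (g : G) :
    ⁅(SemidirectProduct.inl nn : N ⋊[φ] G), (SemidirectProduct.inr g : N ⋊[φ] G)⁆
      = SemidirectProduct.inl (nn * (φ g nn)⁻¹) := by
  rw [commutatorElement_def]
  calc SemidirectProduct.inl nn * SemidirectProduct.inr g * (SemidirectProduct.inl nn)⁻¹
        * (SemidirectProduct.inr g)⁻¹
      = SemidirectProduct.inl nn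
        * (SemidirectProduct.inr g * SemidirectProduct.inl nn⁻¹
            * SemidirectProduct.inr g⁻¹) := by
        rw [map_inv, map_inv]; group
    _ = SemidirectProduct.inl nn * SemidirectProduct.inl ((φ g) nn⁻¹) := by
        rw [SemidirectProduct.inl_aut]
    _ = SemidirectProduct.inl (nn * ((φ g) nn)⁻¹) := by rw [← map_mul, map_inv]

/-- Images of the generators in the concrete model. -/
noncomputable def fSD (hp : p.Prime) (hr : 2 ≤ r) (hrn : r + 1 ≤ n) (hm : n - r ≤ m) :
    Fin 2 → GSD p n m r hp hr hrn hm := fun i =>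
  if i = 0 then SemidirectProduct.inl (Multiplicative.ofAdd (1 : ZMod (p^n)))
  else SemidirectProduct.inr (Multiplicative.ofAdd (1 : ZMod (p^m)))

lemma ofAdd_one_pow (q k : ℕ) :
    (Multiplicative.ofAdd (1 : ZMod q)) ^ k = Multiplicative.ofAdd ((k : ZMod q)) := by
  rw [← ofAdd_nsmul]
  congr 1
  simp [nsmul_eq_mul]

lemma rels_hold (hp : p.Prime) (hr : 2 ≤ r) (hrn : r + 1 ≤ n) (hm : n - r ≤ m) :
    ∀ w ∈ splitRels p n m r, FreeGroup.lift (fSD p n m r hp hr hrn hm) w = 1 := by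
  intro w hw
  have hfact_n : Fact (1 < p^n) := ⟨Nat.one_lt_pow (by omega) hp.one_lt⟩
  have hfact_m : Fact (1 < p^m) := ⟨Nat.one_lt_pow (by omega) hp.one_lt⟩
  rcases hw with rfl | rfl | rfl
  · rw [map_pow, FreeGroup.lift_apply_of]
    show (SemidirectProduct.inl (Multiplicative.ofAdd (1 : ZMod (p^n)))) ^ p ^ n = 1
    rw [← map_pow, ofAdd_one_pow, ZMod.natCast_self]
    simp
  · rw [map_pow, FreeGroup.lift_apply_of]
    show (SemidirectProduct.inr (Multiplicative.ofAdd (1 : ZMod (p^m)))) ^ p ^ m = 1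
    rw [← map_pow, ofAdd_one_pow, ZMod.natCast_self]
    simp
  · rw [map_mul, map_inv, map_pow, map_commutatorElement, FreeGroup.lift_apply_of, FreeGroup.lift_apply_of]
    rw [mul_inv_eq_one]
    show ⁅SemidirectProduct.inl (Multiplicative.ofAdd (1 : ZMod (p^n))),
        SemidirectProduct.inr (Multiplicative.ofAdd (1 : ZMod (p^m)))⁆
      = (SemidirectProduct.inl (Multiplicative.ofAdd (1 : ZMod (p^n)))) ^ p ^ r
    rw [comm_inl_inr, ← map_pow, ofAdd_one_pow]
    congr 1
    rw [phiSD_apply]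
    rw [← ofAdd_neg, ← ofAdd_add]
    congr 1
    simp only [toAdd_ofAdd]
    rw [ZMod.val_one, pow_one, uU_val, mul_one]
    push_cast
    ring

lemma uU_val' (hr : 1 ≤ r) (hn : 1 ≤ n) :
    ((uU p n r hr hn : (ZMod (p^n))ˣ) : ZMod (p^n)) = 1 - (p : ZMod (p^n))^r := by
  show ((isUnit_one_sub_pPow p n r hr hn).unit : ZMod (p^n)) = _
  rw [IsUnit.unit_spec]

/-- The forward homomorphism `GSplit →* GSD`. -/
noncomputable def fwdSD (hp : p.Prime) (hr : 2 ≤ r) (hrn : r + 1 ≤ n) (hm : n - r ≤ m) :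
    GSplit p n m r →* GSD p n m r hp hr hrn hm :=
  PresentedGroup.toGroup (rels_hold p n m r hp hr hrn hm)

/-- The backward homomorphism on the normal factor. -/
noncomputable def bwdN (hp : p.Prime) :
    Multiplicative (ZMod (p^n)) →* GSplit p n m r :=
  letI : NeZero (p^n) := neZero_pn p n hp
  zmodPowHom (aG p n m r) (aG_pow p n m r)

/-- The backward homomorphism on the quotient factor. -/
noncomputable def bwdH (hp : p.Prime) :
    Multiplicative (ZMod (p^m)) →* GSplit p n m r :=
  letI : NeZero (p^m) := neZero_pm p m hp
  zmodPowHom (bG p n m r) (bG_pow p n m r)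

lemma bwd_compat (hp : p.Prime) (hr : 2 ≤ r) (hrn : r + 1 ≤ n) (hm : n - r ≤ m) :
    ∀ g, (bwdN p n m r hp).comp ((phiSD p n m r hp hr hrn hm g).toMonoidHom)
      = (MulAut.conj (bwdH p n m r hp g)).toMonoidHom.comp (bwdN p n m r hp) := by
  intro g
  letI : NeZero (p^n) := neZero_pn p n hp
  letI : NeZero (p^m) := neZero_pm p m hp
  refine MonoidHom.ext fun x => ?_
  simp only [MonoidHom.comp_apply, MulEquiv.coe_toMonoidHom, MulAut.conj_apply]
  rw [phiSD_apply]
  simp only [bwdN, bwdH, zmodPowHom_apply, toAdd_ofAdd]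
  rw [← zpow_natCast (aG p n m r) (x.toAdd).val, conj_aG_pow_bG,
    ← zpow_natCast (aG p n m r)]
  apply zpow_eq_zpow_of_cast_eq (aG_pow p n m r)
  rw [Int.cast_natCast, ZMod.natCast_val, ZMod.cast_id]
  push_cast
  rw [ZMod.natCast_val, ZMod.cast_id, uU_val']

/-- The backward homomorphism `GSD →* GSplit`. -/
noncomputable def bwdSD (hp : p.Prime) (hr : 2 ≤ r) (hrn : r + 1 ≤ n) (hm : n - r ≤ m) :
    GSD p n m r hp hr hrn hm →* GSplit p n m r :=
  SemidirectProduct.lift (bwdN p n m r hp) (bwdH p n m r hp) (bwd_compat p n m r hp hr hrn hm)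

lemma fwdSD_aG (hp : p.Prime) (hr : 2 ≤ r) (hrn : r + 1 ≤ n) (hm : n - r ≤ m) :
    fwdSD p n m r hp hr hrn hm (aG p n m r)
      = SemidirectProduct.inl (Multiplicative.ofAdd (1 : ZMod (p^n))) := by
  show fwdSD p n m r hp hr hrn hm (PresentedGroup.of 0) = _
  rw [fwdSD, PresentedGroup.toGroup.of]
  rfl

lemma fwdSD_bG (hp : p.Prime) (hr : 2 ≤ r) (hrn : r + 1 ≤ n) (hm : n - r ≤ m) :
    fwdSD p n m r hp hr hrn hm (bG p n m r)
      = SemidirectProduct.inr (Multiplicative.ofAdd (1 : ZMod (p^m))) := by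
  show fwdSD p n m r hp hr hrn hm (PresentedGroup.of 1) = _
  rw [fwdSD, PresentedGroup.toGroup.of]
  rfl

/-- The isomorphism `GSplit ≃* GSD`. -/
noncomputable def eqvSD (hp : p.Prime) (hr : 2 ≤ r) (hrn : r + 1 ≤ n) (hm : n - r ≤ m) :
    GSplit p n m r ≃* GSD p n m r hp hr hrn hm := by
  letI : NeZero (p^n) := neZero_pn p n hp
  letI : NeZero (p^m) := neZero_pm p m hp
  have hfact_n : Fact (1 < p^n) := ⟨Nat.one_lt_pow (by omega) hp.one_lt⟩
  have hfact_m : Fact (1 < p^m) := ⟨Nat.one_lt_pow (by omega) hp.one_lt⟩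
  refine MonoidHom.toMulEquiv (fwdSD p n m r hp hr hrn hm) (bwdSD p n m r hp hr hrn hm) ?_ ?_
  · apply PresentedGroup.ext
    intro x
    fin_cases x
    · show bwdSD p n m r hp hr hrn hm (fwdSD p n m r hp hr hrn hm (aG p n m r)) = aG p n m r
      rw [fwdSD_aG, bwdSD, SemidirectProduct.lift_inl]
      show aG p n m r ^ ((Multiplicative.ofAdd (1 : ZMod (p^n))).toAdd).val = aG p n m r
      rw [toAdd_ofAdd, ZMod.val_one, pow_one]
    · show bwdSD p n m r hp hr hrn hm (fwdSD p n m r hp hr hrn hm (bG p n m r)) = bG p n m r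
      rw [fwdSD_bG, bwdSD, SemidirectProduct.lift_inr]
      show bG p n m r ^ ((Multiplicative.ofAdd (1 : ZMod (p^m))).toAdd).val = bG p n m r
      rw [toAdd_ofAdd, ZMod.val_one, pow_one]
  · apply SemidirectProduct.hom_ext
    · refine MonoidHom.ext fun x => ?_
      show fwdSD p n m r hp hr hrn hm (bwdSD p n m r hp hr hrn hm (SemidirectProduct.inl x))
          = SemidirectProduct.inl x
      rw [bwdSD, SemidirectProduct.lift_inl]
      show fwdSD p n m r hp hr hrn hm (aG p n m r ^ (x.toAdd).val) = _
      rw [map_pow, fwdSD_aG, ← map_pow, ofAdd_one_pow, ZMod.natCast_val, ZMod.cast_id,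
        ofAdd_toAdd]
    · refine MonoidHom.ext fun x => ?_
      show fwdSD p n m r hp hr hrn hm (bwdSD p n m r hp hr hrn hm (SemidirectProduct.inr x))
          = SemidirectProduct.inr x
      rw [bwdSD, SemidirectProduct.lift_inr]
      show fwdSD p n m r hp hr hrn hm (bG p n m r ^ (x.toAdd).val) = _
      rw [map_pow, fwdSD_bG, ← map_pow, ofAdd_one_pow, ZMod.natCast_val, ZMod.cast_id,
        ofAdd_toAdd]

lemma uU_pow_mul_cast (hp : p.Prime) (hr : 2 ≤ r) (hrn : r + 1 ≤ n) (k : ℕ) :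
    ((uU p n r (by omega) (by omega) : (ZMod (p^n))ˣ) : ZMod (p^n)) ^ k
        * ((p^(n-r) : ℕ) : ZMod (p^n)) = ((p^(n-r) : ℕ) : ZMod (p^n)) := by
  have hdvd : ((p:ℤ))^n ∣ ((1 - (p:ℤ)^r)^k - 1) * ((p^(n-r) : ℕ) : ℤ) := by
    have h1 : (1 - (p:ℤ)^r) ≡ 1 [ZMOD (p:ℤ)^r] := by
      have := Int.ModEq.sub (Int.ModEq.refl (1:ℤ)) ((Int.modEq_zero_iff_dvd).2 (dvd_refl ((p:ℤ)^r)))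
      simpa using this
    have h2 : (1 - (p:ℤ)^r)^k ≡ 1 [ZMOD (p:ℤ)^r] := by
      simpa using h1.pow k
    obtain ⟨d, hd⟩ := Int.ModEq.dvd h2.symm
    refine ⟨d * 1, ?_⟩
    push_cast
    rw [hd]
    rw [show (p:ℤ)^n = (p:ℤ)^r * (p:ℤ)^(n-r) by rw [← pow_add]; congr 1; omega]
    ring
  have h0 : ((((1 - (p:ℤ)^r)^k - 1) * ((p^(n-r) : ℕ) : ℤ) : ℤ) : ZMod (p^n)) = 0 := by
    rw [ZMod.intCast_zmod_eq_zero_iff_dvd]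
    push_cast
    push_cast at hdvd
    exact hdvd
  have : ((uU p n r (by omega) (by omega) : (ZMod (p^n))ˣ) : ZMod (p^n)) ^ k
      * ((p^(n-r) : ℕ) : ZMod (p^n)) - ((p^(n-r) : ℕ) : ZMod (p^n))
      = ((((1 - (p:ℤ)^r)^k - 1) * ((p^(n-r) : ℕ) : ℤ) : ℤ) : ZMod (p^n)) := by
    rw [uU_val]
    push_cast
    ring
  rw [← sub_eq_zero, this, h0]

lemma center_GSD (hp : p.Prime) (hr : 2 ≤ r) (hrn : r + 1 ≤ n) (hm : n - r ≤ m) :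
    Subgroup.center (GSD p n m r hp hr hrn hm)
      = Subgroup.closure
          {SemidirectProduct.inl (Multiplicative.ofAdd ((p^(n-r) : ℕ) : ZMod (p^n))),
            SemidirectProduct.inr (Multiplicative.ofAdd ((p^(n-r) : ℕ) : ZMod (p^m)))} := by
  letI : NeZero (p^n) := neZero_pn p n hp
  letI : NeZero (p^m) := neZero_pm p m hp
  have hfact_n : Fact (1 < p^n) := ⟨Nat.one_lt_pow (by omega) hp.one_lt⟩
  have hfact_m : Fact (1 < p^m) := ⟨Nat.one_lt_pow (by omega) hp.one_lt⟩
  apply le_antisymm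
  · intro g hg
    -- commuting with `inr (ofAdd 1)` forces `p^(n-r) ∣ g.left.toAdd.val`
    have h1 := Subgroup.mem_center_iff.1 hg
      (SemidirectProduct.inr (Multiplicative.ofAdd (1 : ZMod (p^m))))
    have h1l := congrArg SemidirectProduct.left h1
    simp only [SemidirectProduct.mul_left, SemidirectProduct.left_inr,
      SemidirectProduct.right_inr, one_mul, map_one, mul_one] at h1l
    rw [phiSD_apply] at h1l
    have h1l' := congrArg Multiplicative.toAdd h1l
    simp only [toAdd_ofAdd] at h1l'
    rw [ZMod.val_one, pow_one, uU_val'] at h1l'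
    have hv : (p : ZMod (p^n))^r * (g.left).toAdd = 0 := by linear_combination -h1l'
    have hv2 : ((p^r * ((g.left).toAdd).val : ℕ) : ZMod (p^n)) = 0 := by
      push_cast [ZMod.natCast_val, ZMod.cast_id]
      exact hv
    obtain ⟨d, hd⟩ := (ZMod.natCast_eq_zero_iff _ _).1 hv2
    have hd' : ((g.left).toAdd).val = p^(n-r) * d := by
      have hpr : 0 < p^r := pow_pos hp.pos r
      apply Nat.eq_of_mul_eq_mul_left hpr
      rw [hd, show p^n = p^r * p^(n-r) by rw [← pow_add]; congr 1; omega]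
      ring
    -- commuting with `inl (ofAdd 1)` forces `p^(n-r) ∣ g.right.toAdd.val`
    have h2 := Subgroup.mem_center_iff.1 hg
      (SemidirectProduct.inl (Multiplicative.ofAdd (1 : ZMod (p^n))))
    have h2l := congrArg SemidirectProduct.left h2
    simp only [SemidirectProduct.mul_left, SemidirectProduct.left_inl,
      SemidirectProduct.right_inl, map_one, MulAut.one_apply] at h2l
    have h2l' : phiSD p n m r hp hr hrn hm g.right (Multiplicative.ofAdd (1 : ZMod (p^n)))
        = Multiplicative.ofAdd (1 : ZMod (p^n)) := by
      apply mul_left_cancel (a := g.left)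
      rw [← h2l, mul_comm]
    rw [phiSD_apply] at h2l'
    have h2l'' := congrArg Multiplicative.toAdd h2l'
    simp only [toAdd_ofAdd, mul_one] at h2l''
    have hu1 : uU p n r (by omega) (by omega) ^ ((g.right).toAdd).val = 1 := by
      apply Units.ext
      rw [Units.val_pow_eq_pow_val, Units.val_one]
      exact h2l''
    obtain ⟨e, he⟩ : p^(n-r) ∣ ((g.right).toAdd).val := by
      rw [← orderOf_uU p n r hp hr hrn]
      exact orderOf_dvd_of_pow_eq_one hu1
    rw [← SemidirectProduct.inl_left_mul_inr_right g]
    have hX : (SemidirectProduct.inl (Multiplicative.ofAdd ((p^(n-r) : ℕ) : ZMod (p^n)))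
        : GSD p n m r hp hr hrn hm) ∈ Subgroup.closure
          {SemidirectProduct.inl (Multiplicative.ofAdd ((p^(n-r) : ℕ) : ZMod (p^n))),
            SemidirectProduct.inr (Multiplicative.ofAdd ((p^(n-r) : ℕ) : ZMod (p^m)))} :=
      Subgroup.subset_closure (Set.mem_insert _ _)
    have hY : (SemidirectProduct.inr (Multiplicative.ofAdd ((p^(n-r) : ℕ) : ZMod (p^m)))
        : GSD p n m r hp hr hrn hm) ∈ Subgroup.closure
          {SemidirectProduct.inl (Multiplicative.ofAdd ((p^(n-r) : ℕ) : ZMod (p^n))),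
            SemidirectProduct.inr (Multiplicative.ofAdd ((p^(n-r) : ℕ) : ZMod (p^m)))} :=
      Subgroup.subset_closure (Set.mem_insert_of_mem _ rfl)
    apply Subgroup.mul_mem
    · have hgl : SemidirectProduct.inl g.left
          = (SemidirectProduct.inl (Multiplicative.ofAdd ((p^(n-r) : ℕ) : ZMod (p^n)))
              : GSD p n m r hp hr hrn hm) ^ d := by
        rw [← map_pow]
        congr 1
        calc g.left = Multiplicative.ofAdd ((((g.left).toAdd).val : ZMod (p^n))) := by
              rw [ZMod.natCast_val, ZMod.cast_id, ofAdd_toAdd]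
          _ = Multiplicative.ofAdd (d • ((p^(n-r) : ℕ) : ZMod (p^n))) := by
              rw [hd']
              congr 1
              rw [nsmul_eq_mul]
              push_cast
              ring
          _ = (Multiplicative.ofAdd ((p^(n-r) : ℕ) : ZMod (p^n))) ^ d := ofAdd_nsmul _ _
      rw [hgl]
      exact Subgroup.pow_mem _ hX d
    · have hgr : SemidirectProduct.inr g.right
          = (SemidirectProduct.inr (Multiplicative.ofAdd ((p^(n-r) : ℕ) : ZMod (p^m)))
              : GSD p n m r hp hr hrn hm) ^ e := by
        rw [← map_pow]
        congr 1
        calc g.right = Multiplicative.ofAdd ((((g.right).toAdd).val : ZMod (p^m))) := by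
              rw [ZMod.natCast_val, ZMod.cast_id, ofAdd_toAdd]
          _ = Multiplicative.ofAdd (e • ((p^(n-r) : ℕ) : ZMod (p^m))) := by
              rw [he]
              congr 1
              rw [nsmul_eq_mul]
              push_cast
              ring
          _ = (Multiplicative.ofAdd ((p^(n-r) : ℕ) : ZMod (p^m))) ^ e := ofAdd_nsmul _ _
      rw [hgr]
      exact Subgroup.pow_mem _ hY e
  · rw [Subgroup.closure_le]
    rintro x (rfl | rfl)
    -- `inl (p^(n-r))` is central
    · rw [SetLike.mem_coe, Subgroup.mem_center_iff]
      intro g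
      apply SemidirectProduct.ext
      · simp only [SemidirectProduct.mul_left, SemidirectProduct.left_inl,
          SemidirectProduct.right_inl, map_one, MulAut.one_apply]
        rw [phiSD_apply]
        simp only [toAdd_ofAdd]
        rw [uU_pow_mul_cast p n r hp hr hrn]
        exact mul_comm _ _
      · simp only [SemidirectProduct.mul_right, SemidirectProduct.right_inl, mul_one, one_mul]
    -- `inr (p^(n-r))` is central
    · rw [SetLike.mem_coe, Subgroup.mem_center_iff]
      intro g
      apply SemidirectProduct.ext
      · simp only [SemidirectProduct.mul_left, SemidirectProduct.left_inr,
          SemidirectProduct.right_inr, map_one, mul_one, one_mul]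
        rw [phiSD_apply]
        have hval : uU p n r (by omega) (by omega)
            ^ ((Multiplicative.ofAdd ((p^(n-r) : ℕ) : ZMod (p^m))).toAdd).val = 1 := by
          simp only [toAdd_ofAdd]
          rw [ZMod.val_natCast, ← orderOf_dvd_iff_pow_eq_one, orderOf_uU p n r hp hr hrn,
            Nat.dvd_mod_iff (pow_dvd_pow p (by omega : n - r ≤ m))]
        have : ((uU p n r (by omega) (by omega) : (ZMod (p^n))ˣ) : ZMod (p^n))
            ^ ((Multiplicative.ofAdd ((p^(n-r) : ℕ) : ZMod (p^m))).toAdd).val = 1 := by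
          rw [← Units.val_pow_eq_pow_val, hval, Units.val_one]
        rw [this, one_mul, ofAdd_toAdd]
      · simp only [SemidirectProduct.mul_right, SemidirectProduct.right_inr]
        exact mul_comm _ _

end Main

/-- In `G = G(n,m,r)` with generators `a`, `b`, the center equals
`⟨a^(p^(n-r)), b^(p^(n-r))⟩`. -/
theorem center_gSplit (p n m r : ℕ) (hp : p.Prime)
    (hr : 2 ≤ r) (hrn : r + 1 ≤ n) (hm : n - r ≤ m) :
    Subgroup.center (GSplit p n m r) =
      Subgroup.closure
        {(PresentedGroup.of 0 : GSplit p n m r) ^ p ^ (n - r),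
          (PresentedGroup.of 1 : GSplit p n m r) ^ p ^ (n - r)} := by
  apply center_eq_closure_of_equiv (eqvSD p n m r hp hr hrn hm)
  have h0 : (eqvSD p n m r hp hr hrn hm) ((PresentedGroup.of 0 : GSplit p n m r) ^ p ^ (n-r))
      = SemidirectProduct.inl (Multiplicative.ofAdd ((p^(n-r) : ℕ) : ZMod (p^n))) := by
    show fwdSD p n m r hp hr hrn hm ((aG p n m r) ^ p ^ (n-r)) = _
    rw [map_pow, fwdSD_aG, ← map_pow, ofAdd_one_pow]
  have h1 : (eqvSD p n m r hp hr hrn hm) ((PresentedGroup.of 1 : GSplit p n m r) ^ p ^ (n-r))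
      = SemidirectProduct.inr (Multiplicative.ofAdd ((p^(n-r) : ℕ) : ZMod (p^m))) := by
    show fwdSD p n m r hp hr hrn hm ((bG p n m r) ^ p ^ (n-r)) = _
    rw [map_pow, fwdSD_bG, ← map_pow, ofAdd_one_pow]
  rw [Set.image_pair, h0, h1, center_GSD p n m r hp hr hrn hm]
end
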